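/- arXiv:2302.09700 — 2 statements merged into one kernel-verified Lean document; each statement's English description precedes it below -/
import Mathlib

section
/- Consider the online pricing model with η-pessimistic buyers, where the seller runs the two-phase pricing algorithm with parameter λ ∈ (0,1]. Let rev(p, Q) = p·Pr_{j~P}[θ_j ≥ p and j ∈ Q], let p*(Q) maximize rev(p, Q) over p, and let i_Q ∈ Q be such that θ_{i_Q} = p*(Q). For t > t_λ, let j_t = min{j ∈ S_t}, and let B_t be the event that (1) i_Q ∈ S_t and (2) rev(p*(Q), Q) − rev(θ_{j_t}, Q) ≤ 4·ρ_{t−1} (where by convention ρ_{t_λ} = 1). Let C_t = ∩_{s = t_λ+1}^{t} B_s. Then Pr(C_t^c) ≤ 1/T for every t > t_λ. -/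
open MeasureTheory ProbabilityTheory Finset
open scoped ENNReal Classical

/-- The online pricing model with `d` buyer types and `T` rounds (rounds are indexed
`1, …, T`).  Types arrive i.i.d. from the distribution `q` on `Fin d`; type `i` has
ex-ante value `θ i` and ex-post value distribution `D i` supported on `[0,1]` with
mean `θ i`.  The ex-post values are pre-generated: the buyer of round `s`, if of type
`i` and purchasing, reports the review `vdraw s i`.  The seller posts the price
`price t` on round `t`, the buyer of round `t` uses the threshold `tau t` and buys
iff `price t ≤ tau t` (field `buy`, constrained by `BuyerRule` below). -/
structure PricingModel (Ω : Type) [MeasurableSpace Ω] where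
  d : ℕ
  T : ℕ
  hd : 1 ≤ d
  hT : 1 ≤ T
  η : ℝ
  hη : η ∈ Set.Ioo (0:ℝ) 1
  lam : ℝ
  hlam : lam ∈ Set.Ioc (0:ℝ) 1
  q : Fin d → ℝ
  hq_nonneg : ∀ i, 0 ≤ q i
  hq_sum : ∑ i, q i = 1
  θ : Fin d → ℝ
  hθ_mem : ∀ i, θ i ∈ Set.Icc (0:ℝ) 1
  hθ_mono : Monotone θ
  Pr : Measure Ω
  hPr : IsProbabilityMeasure Pr
  D : Fin d → Measure ℝ
  hD_prob : ∀ i, IsProbabilityMeasure (D i)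
  hD_supp : ∀ i, (D i) (Set.Icc (0:ℝ) 1) = 1
  hD_mean : ∀ i, (∫ x, x ∂(D i)) = θ i
  itype : ℕ → Ω → Fin d
  vdraw : ℕ → Fin d → Ω → ℝ
  h_itype_meas : ∀ s, Measurable (itype s)
  h_vdraw_meas : ∀ s i, Measurable (vdraw s i)
  h_itype_law : ∀ s i, Pr {ω | itype s ω = i} = ENNReal.ofReal (q i)
  h_vdraw_law : ∀ s i, Measure.map (vdraw s i) Pr = D i
  h_indep : iIndepFun
      (fun s ω => (itype s ω, fun i => vdraw s i ω)) Pr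
  h_indep_within : ∀ s, IndepFun (itype s) (fun ω i => vdraw s i ω) Pr
  price : ℕ → Ω → ℝ
  tau : ℕ → Ω → ℝ
  buy : ℕ → Ω → Bool
  pstar : ℝ
  hpstar_mem : pstar ∈ Set.Icc (0:ℝ) 1
  hpstar_opt : ∀ p ∈ Set.Icc (0:ℝ) 1,
      p * (∑ i, if p ≤ θ i then q i else 0) ≤ pstar * (∑ i, if pstar ≤ θ i then q i else 0)

namespace PricingModel

variable {Ω : Type} [MeasurableSpace Ω] (M : PricingModel Ω)

/-- The review left on round `s` (relevant only if a purchase occurred). -/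
noncomputable def review (s : ℕ) (ω : Ω) : ℝ := M.vdraw s (M.itype s ω) ω

/-- Rounds before round `t` on which a buyer of type `i` purchased (and hence reviewed). -/
noncomputable def Phi (i : Fin M.d) (t : ℕ) (ω : Ω) : Finset ℕ :=
  (Finset.Ico 1 t).filter (fun s => M.buy s ω = true ∧ M.itype s ω = i)

/-- Number of reviews by buyers of type `i` before round `t`. -/
noncomputable def nPhi (i : Fin M.d) (t : ℕ) (ω : Ω) : ℕ := (M.Phi i t ω).card

/-- Sum of the reviews left by buyers of type `i` before round `t`. -/
noncomputable def phiSum (i : Fin M.d) (t : ℕ) (ω : Ω) : ℝ :=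
  ∑ s ∈ M.Phi i t ω, M.review s ω

/-- The lower confidence bound `LB_t` available to the round-`t` buyer. -/
noncomputable def LBt (t : ℕ) (ω : Ω) : ℝ :=
  if M.nPhi (M.itype t ω) t ω = 0 then 0
  else max 0 (M.phiSum (M.itype t ω) t ω / (M.nPhi (M.itype t ω) t ω)
      - Real.sqrt (Real.log ((t : ℝ) / M.η) / (2 * (M.nPhi (M.itype t ω) t ω))))

/-- The seller's lower confidence bound `LB_{i,t}` on the value of type `i` at round `t`. -/
noncomputable def LBi (i : Fin M.d) (t : ℕ) (ω : Ω) : ℝ :=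
  if M.nPhi i t ω = 0 then 0
  else max 0 (M.phiSum i t ω / (M.nPhi i t ω)
      - Real.sqrt (Real.log ((M.T : ℝ) / M.η) / (2 * (M.nPhi i t ω))))

/-- Length of Phase 1: `t_λ = 32 ln(d T²)/λ + 1` (rounded). -/
noncomputable def tlam : ℕ := ⌈32 * Real.log ((M.d : ℝ) * (M.T : ℝ) ^ 2) / M.lam⌉₊ + 1

/-- Empirical frequency of type `i` during Phase 1. -/
noncomputable def qbar (i : Fin M.d) (ω : Ω) : ℝ :=
  (((Finset.Icc 1 M.tlam).filter (fun s => M.itype s ω = i)).card : ℝ) / M.tlam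

/-- The set `Q` of types appearing on at least a `(3λ/4)`-fraction of Phase-1 rounds. -/
noncomputable def Qset (ω : Ω) : Finset (Fin M.d) :=
  Finset.univ.filter (fun i => 3 * M.lam / 4 ≤ M.qbar i ω)

/-- The confidence radius `ρ_t = sqrt(ln(d T²)/(2(t − t_λ)))`. -/
noncomputable def rho (t : ℕ) : ℝ :=
  Real.sqrt (Real.log ((M.d : ℝ) * (M.T : ℝ) ^ 2) / (2 * ((t : ℝ) - (M.tlam : ℝ))))

/-- `ρ` with the convention `ρ_{t_λ} = 1`. -/
noncomputable def rho' (t : ℕ) : ℝ := if t = M.tlam then 1 else M.rho t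

/-- The revenue estimate `μ̄_{i,t}`. -/
noncomputable def mubar (i : Fin M.d) (t : ℕ) (ω : Ω) : ℝ :=
  (∑ s ∈ Finset.Icc (M.tlam + 1) t,
      if M.buy s ω = true ∧ M.θ i ≤ M.θ (M.itype s ω) ∧ M.itype s ω ∈ M.Qset ω
      then M.θ i else 0) / ((t : ℝ) - (M.tlam : ℝ))

/-- Upper confidence bound `μ̂_{i,t}`. -/
noncomputable def muhat (i : Fin M.d) (t : ℕ) (ω : Ω) : ℝ := M.mubar i t ω + M.rho t

/-- Lower confidence bound `μ̌_{i,t}`. -/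
noncomputable def mucheck (i : Fin M.d) (t : ℕ) (ω : Ω) : ℝ := M.mubar i t ω - M.rho t

/-- `rev(p, Q) = p ⋅ Pr_{j∼P}[θ_j ≥ p and j ∈ Q]` (for the realized random set `Q`). -/
noncomputable def revQ (p : ℝ) (ω : Ω) : ℝ :=
  p * ∑ j, if p ≤ M.θ j ∧ j ∈ M.Qset ω then M.q j else 0

/-- The seller's realized revenue over the `T` rounds. -/
noncomputable def revenue (ω : Ω) : ℝ :=
  ∑ t ∈ Finset.Icc 1 M.T, M.price t ω * (if M.buy t ω then 1 else 0)

/-- Expected regret: `T⋅p*⋅Pr[θ_i ≥ p*] − E[Σ_t p_t b_t]`. -/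
noncomputable def regret : ℝ :=
  (M.T : ℝ) * (M.pstar * ∑ i, if M.pstar ≤ M.θ i then M.q i else 0)
    - ∫ ω, M.revenue ω ∂M.Pr

/-- The smallest appearance probability of any type. -/
noncomputable def qmin : ℝ := ⨅ i, M.q i

/-- σ-algebra of the history before round `t` (all types and potential reviews of
rounds `< t`). -/
noncomputable def histMS (t : ℕ) : MeasurableSpace Ω :=
  MeasurableSpace.comap
    (fun ω => fun s : Fin t => (M.itype (s : ℕ) ω, fun i => M.vdraw (s : ℕ) i ω))
    inferInstance

/-- Buyers purchase iff the price is at most their threshold. -/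
def BuyerRule : Prop := ∀ t ω, (M.buy t ω = true ↔ M.price t ω ≤ M.tau t ω)

/-- η-pessimism: the buyer's threshold is at least the lower confidence bound `LB_t`. -/
def Pessimistic : Prop := ∀ t ω, 1 ≤ t → t ≤ M.T → M.LBt t ω ≤ M.tau t ω

/-- The buyer's threshold is a function of the history (in particular of the past
reviews) and of the buyer's own type. -/
def TauAdapted : Prop :=
  ∀ t, Measurable[M.histMS t ⊔ MeasurableSpace.comap (M.itype t) inferInstance] (M.tau t)

/-- The seller's price is a measurable function of the observable history. -/
def PriceAdapted : Prop := ∀ t, Measurable[M.histMS t] (M.price t)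

end PricingModel

/-- A run of the two-phase pricing algorithm: Phase 1 (rounds `1,…,t_λ`) gives the item
for free; `S` is the successively refined active set of Phase 2, initialized at `Q`,
during which the price is `min_{i ∈ S_t} min(θ_i, LB_{i,t})` and types whose revenue
upper confidence bound falls below the best lower confidence bound are eliminated. -/
structure Algorithm {Ω : Type} [MeasurableSpace Ω] (M : PricingModel Ω) where
  S : ℕ → Ω → Finset (Fin M.d)
  h_phase1_price : ∀ t ω, t ≤ M.tlam → M.price t ω = 0
  h_phase1_buy : ∀ t ω, 1 ≤ t → t ≤ M.tlam → M.buy t ω = true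
  h_S_init : ∀ ω, S (M.tlam + 1) ω = M.Qset ω
  h_price2 : ∀ t ω, M.tlam < t →
      M.price t ω =
        if h : (S t ω).Nonempty then (S t ω).inf' h (fun i => min (M.θ i) (M.LBi i t ω))
        else 0
  h_S_step : ∀ t ω, M.tlam < t →
      S (t + 1) ω = (S t ω).filter
        (fun i => ∃ j ∈ S t ω, j ≤ i ∧ ∀ k ∈ S t ω, M.mucheck k t ω ≤ M.muhat j t ω)

section AuxSE

open Real

lemma SEP.hoeffding_bernoulli {p : ℝ} (hp0 : 0 ≤ p) (hp1 : p ≤ 1) (c : ℝ) :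
    1 - p + p * Real.exp c ≤ Real.exp (p * c + c ^ 2 / 8) := by
  set u : ℝ → ℝ := fun x => 1 - p + p * Real.exp x with hu_def
  have hupos : ∀ x, 0 < u x := by
    intro x
    have h := Real.exp_pos x
    rcases eq_or_lt_of_le hp0 with h0 | h0
    · simp [hu_def, ← h0]
    · have : 0 < p * Real.exp x := mul_pos h0 h
      simp only [hu_def]; nlinarith
  have hu : ∀ x, HasDerivAt u (p * Real.exp x) x := fun x =>
    ((Real.hasDerivAt_exp x).const_mul p).const_add (1 - p)
  set φ : ℝ → ℝ := fun x => p + x / 4 - p * Real.exp x / u x with hφ_def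
  set f : ℝ → ℝ := fun x => p * x + x ^ 2 / 8 - Real.log (u x) with hf_def
  have hnum : ∀ x : ℝ, HasDerivAt (fun x => p * Real.exp x) (p * Real.exp x) x := fun x =>
    (Real.hasDerivAt_exp x).const_mul p
  have hf : ∀ x, HasDerivAt f (φ x) x := by
    intro x
    have h1 : HasDerivAt (fun x : ℝ => p * x) p x := by
      simpa using (hasDerivAt_id x).const_mul p
    have h2 : HasDerivAt (fun x : ℝ => x ^ 2 / 8) (x / 4) x := by
      have := (hasDerivAt_pow 2 x).div_const 8
      refine this.congr_deriv ?_
      norm_num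
      ring
    have h3 : HasDerivAt (fun x => Real.log (u x)) (p * Real.exp x / u x) x :=
      (hu x).log (hupos x).ne'
    exact (h1.add h2).sub h3
  have hφ : ∀ x, HasDerivAt φ
      (1 / 4 - (p * Real.exp x * u x - p * Real.exp x * (p * Real.exp x)) / (u x) ^ 2) x := by
    intro x
    have h2 : HasDerivAt (fun x : ℝ => p + x / 4) (1 / 4) x := by
      simpa using ((hasDerivAt_id x).div_const 4).const_add p
    have h3 : HasDerivAt (fun x => p * Real.exp x / u x)
        ((p * Real.exp x * u x - p * Real.exp x * (p * Real.exp x)) / (u x) ^ 2) x :=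
      (hnum x).div (hu x) (hupos x).ne'
    exact h2.sub h3
  have hφ'_nonneg : ∀ x, 0 ≤ 1 / 4 -
      (p * Real.exp x * u x - p * Real.exp x * (p * Real.exp x)) / (u x) ^ 2 := by
    intro x
    have ha : 0 ≤ p * Real.exp x := mul_nonneg hp0 (Real.exp_pos x).le
    have hux : u x = (1 - p) + p * Real.exp x := rfl
    have hpos := hupos x
    have h4 : (p * Real.exp x * u x - p * Real.exp x * (p * Real.exp x)) / (u x) ^ 2 ≤ 1 / 4 := by
      rw [div_le_iff₀ (by positivity)]
      nlinarith [sq_nonneg ((1 - p) - p * Real.exp x)]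
    linarith
  have hφmono : Monotone φ :=
    monotone_of_deriv_nonneg (fun x => (hφ x).differentiableAt) (fun x => by
      rw [(hφ x).deriv]; exact hφ'_nonneg x)
  have hφ0 : φ 0 = 0 := by
    have : u 0 = 1 := by simp [hu_def]
    simp [hφ_def, this]
  have hf0 : f 0 = 0 := by
    have : u 0 = 1 := by simp [hu_def]
    simp [hf_def, this]
  have hfc : 0 ≤ f c := by
    rcases le_total 0 c with hc | hc
    · have hmono : MonotoneOn f (Set.Ici (0:ℝ)) := by
        apply monotoneOn_of_deriv_nonneg (convex_Ici 0)
        · exact Continuous.continuousOn (by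
            fun_prop (disch := intro x; exact (hupos x).ne'))
        · intro x hx
          exact (hf x).differentiableAt.differentiableWithinAt
        · intro x hx
          rw [(hf x).deriv]
          rw [interior_Ici] at hx
          calc (0:ℝ) = φ 0 := hφ0.symm
          _ ≤ φ x := hφmono (le_of_lt hx)
      have := hmono (Set.self_mem_Ici) (Set.mem_Ici.2 hc) hc
      linarith [hf0 ▸ this]
    · have hanti : AntitoneOn f (Set.Iic (0:ℝ)) := by
        apply antitoneOn_of_deriv_nonpos (convex_Iic 0)
        · exact Continuous.continuousOn (by
            fun_prop (disch := intro x; exact (hupos x).ne'))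
        · intro x hx
          exact (hf x).differentiableAt.differentiableWithinAt
        · intro x hx
          rw [(hf x).deriv]
          rw [interior_Iic] at hx
          calc φ x ≤ φ 0 := hφmono (le_of_lt hx)
          _ = 0 := hφ0
      have := hanti (Set.mem_Iic.2 hc) (Set.self_mem_Iic) hc
      linarith [hf0 ▸ this]
  have hlog : Real.log (u c) ≤ p * c + c ^ 2 / 8 := by
    simp only [hf_def] at hfc; linarith
  calc u c = Real.exp (Real.log (u c)) := (Real.exp_log (hupos c)).symm
  _ ≤ Real.exp (p * c + c ^ 2 / 8) := Real.exp_le_exp.2 hlog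

lemma SEP.chernoff_indicator {Ω : Type} [MeasurableSpace Ω] {μ : Measure Ω}
    (X : ℕ → Ω → ℝ)
    (hind : iIndepFun X μ)
    (hmeas : ∀ s, Measurable (X s))
    (h01 : ∀ s ω, X s ω = 0 ∨ X s ω = 1)
    (I : Finset ℕ) {p : ℝ} (hp0 : 0 ≤ p) (hp1 : p ≤ 1)
    (hmean : ∀ s ∈ I, ∫ ω, X s ω ∂μ = p)
    {ε : ℝ} (hε : 0 ≤ ε) :
    μ {ω | (I.card : ℝ) * (p + ε) ≤ ∑ s ∈ I, X s ω}
      ≤ ENNReal.ofReal (Real.exp (-2 * I.card * ε ^ 2)) := by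
  haveI : IsProbabilityMeasure μ := hind.isProbabilityMeasure
  set t₀ : ℝ := 4 * ε with ht₀_def
  have ht₀ : 0 ≤ t₀ := by positivity
  have hXle : ∀ s ω, X s ω ≤ 1 := fun s ω => by rcases h01 s ω with h | h <;> simp [h]
  have hX0 : ∀ s ω, 0 ≤ X s ω := fun s ω => by rcases h01 s ω with h | h <;> simp [h]
  have hXint : ∀ s, Integrable (X s) μ := by
    intro s
    refine Integrable.mono' (integrable_const 1) (hmeas s).aestronglyMeasurable ?_
    filter_upwards with ω
    rw [Real.norm_eq_abs, abs_of_nonneg (hX0 s ω)]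
    exact hXle s ω
  have hint : ∀ s, Integrable (fun ω => Real.exp (t₀ * X s ω)) μ := by
    intro s
    refine Integrable.mono' (integrable_const (Real.exp t₀))
      ((hmeas s).const_mul t₀).exp.aestronglyMeasurable ?_
    filter_upwards with ω
    rw [Real.norm_eq_abs, abs_of_nonneg (Real.exp_pos _).le, Real.exp_le_exp]
    calc t₀ * X s ω ≤ t₀ * 1 := mul_le_mul_of_nonneg_left (hXle s ω) ht₀
    _ = t₀ := mul_one _
  have hSle : ∀ ω, (∑ s ∈ I, X s ω) ≤ I.card := by
    intro ω
    calc (∑ s ∈ I, X s ω) ≤ ∑ s ∈ I, (1:ℝ) := Finset.sum_le_sum (fun s _ => hXle s ω)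
    _ = I.card := by simp
  have hintS : Integrable (fun ω => Real.exp (t₀ * ∑ s ∈ I, X s ω)) μ := by
    refine Integrable.mono' (integrable_const (Real.exp (t₀ * I.card)))
      ((Finset.measurable_sum I (fun s _ => hmeas s)).const_mul t₀).exp.aestronglyMeasurable ?_
    filter_upwards with ω
    rw [Real.norm_eq_abs, abs_of_nonneg (Real.exp_pos _).le, Real.exp_le_exp]
    exact mul_le_mul_of_nonneg_left (hSle ω) ht₀
  have hmgf_one : ∀ s ∈ I, mgf (X s) μ t₀ ≤ Real.exp (p * t₀ + t₀ ^ 2 / 8) := by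
    intro s hs
    have hpt : ∀ ω, Real.exp (t₀ * X s ω) = 1 + (Real.exp t₀ - 1) * X s ω := by
      intro ω
      rcases h01 s ω with h | h <;> simp [h]
    have : mgf (X s) μ t₀ = 1 + (Real.exp t₀ - 1) * p := by
      rw [mgf]
      calc ∫ ω, Real.exp (t₀ * X s ω) ∂μ
          = ∫ ω, (1 + (Real.exp t₀ - 1) * X s ω) ∂μ := by
            exact integral_congr_ae (Filter.Eventually.of_forall hpt)
      _ = 1 + (Real.exp t₀ - 1) * p := by
            rw [integral_add (integrable_const 1) ((hXint s).const_mul _),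
              integral_const, integral_const_mul, hmean s hs]
            simp
    rw [this]
    have := SEP.hoeffding_bernoulli hp0 hp1 t₀
    calc 1 + (Real.exp t₀ - 1) * p = 1 - p + p * Real.exp t₀ := by ring
    _ ≤ Real.exp (p * t₀ + t₀ ^ 2 / 8) := this
  have hmgfS : mgf (∑ s ∈ I, X s) μ t₀ ≤ Real.exp (I.card * (p * t₀ + t₀ ^ 2 / 8)) := by
    rw [hind.mgf_sum hmeas I]
    calc ∏ s ∈ I, mgf (X s) μ t₀ ≤ ∏ s ∈ I, Real.exp (p * t₀ + t₀ ^ 2 / 8) :=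
      Finset.prod_le_prod (fun s _ => mgf_nonneg) hmgf_one
    _ = Real.exp (I.card * (p * t₀ + t₀ ^ 2 / 8)) := by
        rw [Finset.prod_const, ← Real.exp_nat_mul]
  have hset : {ω | (I.card : ℝ) * (p + ε) ≤ ∑ s ∈ I, X s ω}
      = {ω | (I.card : ℝ) * (p + ε) ≤ (fun ω => ∑ s ∈ I, X s ω) ω} := rfl
  have hkey := measure_ge_le_exp_mul_mgf (μ := μ) (X := fun ω => ∑ s ∈ I, X s ω)
    ((I.card : ℝ) * (p + ε)) ht₀ hintS
  have hmgf_eq : mgf (fun ω => ∑ s ∈ I, X s ω) μ t₀ = mgf (∑ s ∈ I, X s) μ t₀ := by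
    congr 1
    ext ω
    simp
  rw [hmgf_eq] at hkey
  have hfinal : (μ {ω | (I.card : ℝ) * (p + ε) ≤ ∑ s ∈ I, X s ω}).toReal
      ≤ Real.exp (-2 * I.card * ε ^ 2) := by
    refine hkey.trans ?_
    calc Real.exp (-t₀ * ((I.card : ℝ) * (p + ε))) * mgf (∑ s ∈ I, X s) μ t₀
        ≤ Real.exp (-t₀ * ((I.card : ℝ) * (p + ε))) * Real.exp (I.card * (p * t₀ + t₀ ^ 2 / 8)) :=
          mul_le_mul_of_nonneg_left hmgfS (Real.exp_pos _).le
    _ = Real.exp (-t₀ * ((I.card : ℝ) * (p + ε)) + I.card * (p * t₀ + t₀ ^ 2 / 8)) := by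
          rw [← Real.exp_add]
    _ = Real.exp (-2 * I.card * ε ^ 2) := by
          congr 1
          rw [ht₀_def]; ring
  rw [ENNReal.le_ofReal_iff_toReal_le (measure_ne_top μ _) (Real.exp_pos _).le]
  exact hfinal

lemma SEP.chernoff_indicator_lower {Ω : Type} [MeasurableSpace Ω] {μ : Measure Ω}
    (X : ℕ → Ω → ℝ)
    (hind : iIndepFun X μ)
    (hmeas : ∀ s, Measurable (X s))
    (h01 : ∀ s ω, X s ω = 0 ∨ X s ω = 1)
    (I : Finset ℕ) {p : ℝ} (hp0 : 0 ≤ p) (hp1 : p ≤ 1)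
    (hmean : ∀ s ∈ I, ∫ ω, X s ω ∂μ = p)
    {ε : ℝ} (hε : 0 ≤ ε) :
    μ {ω | ∑ s ∈ I, X s ω ≤ (I.card : ℝ) * (p - ε)}
      ≤ ENNReal.ofReal (Real.exp (-2 * I.card * ε ^ 2)) := by
  haveI : IsProbabilityMeasure μ := hind.isProbabilityMeasure
  set Y : ℕ → Ω → ℝ := fun s ω => 1 - X s ω with hY_def
  have hindY : iIndepFun Y μ := by
    have := hind.comp (fun _ => fun x : ℝ => 1 - x)
      (fun _ => measurable_const.sub measurable_id)
    exact this
  have hsub : {ω | ∑ s ∈ I, X s ω ≤ (I.card : ℝ) * (p - ε)}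
      ⊆ {ω | (I.card : ℝ) * ((1 - p) + ε) ≤ ∑ s ∈ I, Y s ω} := by
    intro ω hω
    simp only [Set.mem_setOf_eq] at *
    have : ∑ s ∈ I, Y s ω = I.card - ∑ s ∈ I, X s ω := by
      simp [hY_def, Finset.sum_sub_distrib]
    rw [this]
    nlinarith [hω]
  refine (measure_mono hsub).trans ?_
  exact SEP.chernoff_indicator Y hindY (fun s => measurable_const.sub (hmeas s))
    (fun s ω => by rcases h01 s ω with h | h <;> simp [hY_def, h])
    I (by linarith) (by linarith)
    (fun s hs => by
      rw [integral_sub (integrable_const 1) ?_, integral_const, hmean s hs]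
      · simp
      · refine Integrable.mono' (integrable_const 1) (hmeas s).aestronglyMeasurable ?_
        filter_upwards with ω
        rcases h01 s ω with h | h <;> simp [h]) hε

end AuxSE

namespace SEP

variable {Ω : Type} [MeasurableSpace Ω] (M : PricingModel Ω)

/-- `rev(θ·, Q₀)` as a function of a fixed finite set `Q₀`. -/
noncomputable def revF (p : ℝ) (Q₀ : Finset (Fin M.d)) : ℝ :=
  p * ∑ j, if p ≤ M.θ j ∧ j ∈ Q₀ then M.q j else 0

/-- population probability of `{θ j ≥ θ i} ∩ Q₀`. -/
noncomputable def prob (Q₀ : Finset (Fin M.d)) (i : Fin M.d) : ℝ :=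
  ∑ j, if M.θ i ≤ M.θ j ∧ j ∈ Q₀ then M.q j else 0

/-- canonical optimal type for `Q₀`: smallest revenue-maximizing element of `Q₀`. -/
noncomputable def jstar (Q₀ : Finset (Fin M.d)) : Fin M.d :=
  if h : (Q₀.filter (fun i => ∀ k ∈ Q₀, revF M (M.θ k) Q₀ ≤ revF M (M.θ i) Q₀)).Nonempty
  then (Q₀.filter (fun i => ∀ k ∈ Q₀, revF M (M.θ k) Q₀ ≤ revF M (M.θ i) Q₀)).min' h
  else ⟨0, M.hd⟩

/-- the indicator random variable `1{θ_{i_s} ≥ θ_i, i_s ∈ Q₀}`. -/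
noncomputable def Xi (Q₀ : Finset (Fin M.d)) (i : Fin M.d) (s : ℕ) (ω : Ω) : ℝ :=
  if M.θ i ≤ M.θ (M.itype s ω) ∧ M.itype s ω ∈ Q₀ then 1 else 0

lemma revQ_eq_revF (p : ℝ) (ω : Ω) : M.revQ p ω = revF M p (M.Qset ω) := rfl

lemma revF_theta_eq (Q₀ : Finset (Fin M.d)) (i : Fin M.d) :
    revF M (M.θ i) Q₀ = M.θ i * prob M Q₀ i := rfl

lemma revF_congr {Q₀ : Finset (Fin M.d)} {i k : Fin M.d} (h : M.θ i = M.θ k) :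
    revF M (M.θ i) Q₀ = revF M (M.θ k) Q₀ := by rw [h]

lemma prob_nonneg (Q₀ : Finset (Fin M.d)) (i : Fin M.d) : 0 ≤ prob M Q₀ i :=
  Finset.sum_nonneg fun j _ => by
    split_ifs with h
    · exact M.hq_nonneg j
    · exact le_refl 0

lemma prob_le_one (Q₀ : Finset (Fin M.d)) (i : Fin M.d) : prob M Q₀ i ≤ 1 := by
  rw [← M.hq_sum]
  refine Finset.sum_le_sum fun j _ => ?_
  split_ifs with h
  · exact le_refl _
  · exact M.hq_nonneg j

lemma revF_theta_nonneg (Q₀ : Finset (Fin M.d)) (i : Fin M.d) : 0 ≤ revF M (M.θ i) Q₀ :=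
  mul_nonneg (M.hθ_mem i).1 (prob_nonneg M Q₀ i)

lemma revF_theta_le_one (Q₀ : Finset (Fin M.d)) (i : Fin M.d) : revF M (M.θ i) Q₀ ≤ 1 := by
  rw [revF_theta_eq]
  exact mul_le_one₀ (M.hθ_mem i).2 (prob_nonneg M Q₀ i) (prob_le_one M Q₀ i)

lemma rho_nonneg (t : ℕ) : 0 ≤ M.rho t := Real.sqrt_nonneg _

lemma rho'_nonneg (t : ℕ) : 0 ≤ M.rho' t := by
  unfold PricingModel.rho'
  split_ifs
  · norm_num
  · exact Real.sqrt_nonneg _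

lemma tlam_pos : 1 ≤ M.tlam := Nat.le_add_left 1 _

/-- Properties of `jstar` when the argmax set is nonempty. -/
lemma jstar_spec {Q₀ : Finset (Fin M.d)} {i₀ : Fin M.d} (hi₀ : i₀ ∈ Q₀)
    (hmax : ∀ k ∈ Q₀, revF M (M.θ k) Q₀ ≤ revF M (M.θ i₀) Q₀) :
    jstar M Q₀ ∈ Q₀ ∧ (∀ k ∈ Q₀, revF M (M.θ k) Q₀ ≤ revF M (M.θ (jstar M Q₀)) Q₀) ∧
      jstar M Q₀ ≤ i₀ ∧ (∀ j ∈ Q₀, M.θ j = M.θ (jstar M Q₀) → jstar M Q₀ ≤ j) := by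
  classical
  set F := Q₀.filter (fun i => ∀ k ∈ Q₀, revF M (M.θ k) Q₀ ≤ revF M (M.θ i) Q₀) with hF
  have hi₀F : i₀ ∈ F := Finset.mem_filter.2 ⟨hi₀, hmax⟩
  have hne : F.Nonempty := ⟨i₀, hi₀F⟩
  have hjs : jstar M Q₀ = F.min' hne := by
    unfold jstar
    rw [dif_pos]
  have hmem := Finset.min'_mem F hne
  rw [← hjs] at hmem
  obtain ⟨hjQ, hjmax⟩ := Finset.mem_filter.1 hmem
  refine ⟨hjQ, hjmax, ?_, ?_⟩
  · rw [hjs]; exact Finset.min'_le F i₀ hi₀F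
  · intro j hjQ' hθj
    have hjF : j ∈ F := Finset.mem_filter.2 ⟨hjQ', by
      intro k hk
      calc revF M (M.θ k) Q₀ ≤ revF M (M.θ (jstar M Q₀)) Q₀ := hjmax k hk
      _ = revF M (M.θ j) Q₀ := (revF_congr M hθj).symm⟩
    rw [hjs]
    exact Finset.min'_le F j hjF

/-- For `j* = jstar Q₀`, membership `θ j* ≤ θ j` is equivalent to `j* ≤ j` inside `Q₀`. -/
lemma jstar_iff {Q₀ : Finset (Fin M.d)} (htie : ∀ j ∈ Q₀, M.θ j = M.θ (jstar M Q₀) → jstar M Q₀ ≤ j)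
    {j : Fin M.d} (hj : j ∈ Q₀) : (M.θ (jstar M Q₀) ≤ M.θ j ↔ jstar M Q₀ ≤ j) := by
  constructor
  · intro h
    by_contra hlt
    push_neg at hlt
    have h2 : M.θ j ≤ M.θ (jstar M Q₀) := M.hθ_mono hlt.le
    exact absurd (htie j hj (le_antisymm h2 h)) (not_le.2 hlt)
  · intro h
    exact M.hθ_mono h

end SEP

namespace SEP

variable {Ω : Type} [MeasurableSpace Ω] (M : PricingModel Ω)

lemma LBi_le_LBt (s : ℕ) (hs1 : 1 ≤ s) (hsT : s ≤ M.T) (ω : Ω) :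
    M.LBi (M.itype s ω) s ω ≤ M.LBt s ω := by
  unfold PricingModel.LBi PricingModel.LBt
  split_ifs with h
  · exact le_refl 0
  · have hη0 : (0:ℝ) < M.η := M.hη.1
    have hn : 0 < M.nPhi (M.itype s ω) s ω := Nat.pos_of_ne_zero h
    have hs0 : (0:ℝ) < (s:ℝ) / M.η := by
      have : (0:ℝ) < (s:ℝ) := by exact_mod_cast hs1
      positivity
    have hlog : Real.log ((s:ℝ) / M.η) ≤ Real.log ((M.T:ℝ) / M.η) := by
      apply Real.log_le_log hs0
      gcongr
    have hn' : (0:ℝ) < (M.nPhi (M.itype s ω) s ω : ℝ) := by exact_mod_cast hn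
    have hfrac : Real.log ((s:ℝ) / M.η) / (2 * (M.nPhi (M.itype s ω) s ω : ℝ))
        ≤ Real.log ((M.T:ℝ) / M.η) / (2 * (M.nPhi (M.itype s ω) s ω : ℝ)) := by
      gcongr
    exact max_le_max (le_refl 0) (sub_le_sub_left (Real.sqrt_le_sqrt hfrac) _)

lemma hcard_Icc (a b : ℕ) (h : a ≤ b) :
    (((Finset.Icc (a+1) b).card : ℝ)) = (b:ℝ) - (a:ℝ) := by
  rw [Nat.card_Icc]
  have h2 : b + 1 - (a + 1) = b - a := by omega
  rw [h2, Nat.cast_sub h]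

/-- The main deterministic lemma: on the good event, the conclusion of the theorem holds. -/
lemma deterministic (A : Algorithm M) (hP : M.Pessimistic) (hBR : M.BuyerRule)
    (pQ : Ω → ℝ) (iQ : Ω → Fin M.d)
    (hiQ : ∀ ω, iQ ω ∈ M.Qset ω) (hθiQ : ∀ ω, M.θ (iQ ω) = pQ ω)
    (hopt : ∀ ω p, M.revQ p ω ≤ M.revQ (pQ ω) ω)
    (t : ℕ) (ht1 : M.tlam < t) (ht2 : t ≤ M.T) (ω : Ω)
    (hgood : ∀ t' ∈ Finset.Ico (M.tlam + 1) t,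
      ¬ (∑ s ∈ Finset.Icc (M.tlam+1) t', Xi M (M.Qset ω) (jstar M (M.Qset ω)) s ω
          ≤ ((Finset.Icc (M.tlam+1) t').card : ℝ) *
            (prob M (M.Qset ω) (jstar M (M.Qset ω)) - M.rho t'))
      ∧ ∀ k : Fin M.d, M.θ k ≠ M.θ (jstar M (M.Qset ω)) →
        ¬ (((Finset.Icc (M.tlam+1) t').card : ℝ) * (prob M (M.Qset ω) k + M.rho t')
            ≤ ∑ s ∈ Finset.Icc (M.tlam+1) t', Xi M (M.Qset ω) k s ω)) :
    ∀ s ∈ Finset.Icc (M.tlam + 1) t,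
      iQ ω ∈ A.S s ω ∧
      ∃ j ∈ A.S s ω, (∀ k ∈ A.S s ω, j ≤ k) ∧
        M.revQ (pQ ω) ω - M.revQ (M.θ j) ω ≤ 4 * M.rho' (s - 1) := by
  classical
  -- jstar facts
  have hiQQ := hiQ ω
  have hmax0 : ∀ k ∈ M.Qset ω, revF M (M.θ k) (M.Qset ω) ≤ revF M (M.θ (iQ ω)) (M.Qset ω) := by
    intro k _
    have h1 := hopt ω (M.θ k)
    rw [revQ_eq_revF, revQ_eq_revF, ← hθiQ ω] at h1
    exact h1
  obtain ⟨hjsQ, hjsmax, hjsle, hjstie⟩ := jstar_spec M hiQQ hmax0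
  have hjsmax' : ∀ k : Fin M.d, revF M (M.θ k) (M.Qset ω) ≤ revF M (M.θ (jstar M (M.Qset ω))) (M.Qset ω) := by
    intro k
    have h1 := hopt ω (M.θ k)
    rw [revQ_eq_revF, revQ_eq_revF, ← hθiQ ω] at h1
    exact h1.trans (hjsmax (iQ ω) hiQQ)
  have hrevjs : revF M (M.θ (jstar M (M.Qset ω))) (M.Qset ω) = M.revQ (pQ ω) ω := by
    apply le_antisymm
    · have h1 := hopt ω (M.θ (jstar M (M.Qset ω)))
      rw [revQ_eq_revF] at h1
      exact h1
    · rw [revQ_eq_revF, ← hθiQ ω]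
      exact hjsmax (iQ ω) hiQQ
  -- structural facts about S
  have hSanti : ∀ s' s : ℕ, M.tlam + 1 ≤ s' → s' ≤ s → A.S s ω ⊆ A.S s' ω := by
    intro s' s hs' hss
    induction s, hss using Nat.le_induction with
    | base => exact subset_rfl
    | succ n hn ih =>
      have hstep : A.S (n+1) ω ⊆ A.S n ω := by
        rw [A.h_S_step n ω (by omega)]
        exact Finset.filter_subset _ _
      exact hstep.trans ih
  have hSsubQ : ∀ s : ℕ, M.tlam + 1 ≤ s → A.S s ω ⊆ M.Qset ω := by
    intro s hs
    have h1 := hSanti (M.tlam+1) s le_rfl hs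
    rw [A.h_S_init ω] at h1
    exact h1
  have hbuyL : ∀ s : ℕ, M.tlam < s → s ≤ M.T → M.itype s ω ∈ A.S s ω → M.buy s ω = true := by
    intro s hs hsT hmem
    have hne : (A.S s ω).Nonempty := ⟨_, hmem⟩
    have hprice := A.h_price2 s ω hs
    rw [dif_pos hne] at hprice
    have h1 : M.price s ω ≤ min (M.θ (M.itype s ω)) (M.LBi (M.itype s ω) s ω) := by
      rw [hprice]; exact Finset.inf'_le _ hmem
    have h2 := LBi_le_LBt M s (by have := tlam_pos M; omega) hsT ω
    have h3 := hP s ω (by have := tlam_pos M; omega) hsT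
    exact (hBR s ω).2 (h1.trans ((min_le_right _ _).trans (h2.trans h3)))
  -- upper bound for mubar
  have hmu_up : ∀ (k : Fin M.d) (n : ℕ), M.tlam + 1 ≤ n → n < t → M.θ k ≠ M.θ (jstar M (M.Qset ω)) →
      M.mubar k n ω ≤ M.θ k * (prob M (M.Qset ω) k + M.rho n) := by
    intro k n hn1 hn2 hθk
    have hg := (hgood n (Finset.mem_Ico.2 ⟨hn1, hn2⟩)).2 k hθk
    push_neg at hg
    have hnpos : (0:ℝ) < (n:ℝ) - (M.tlam:ℝ) := by
      have h1 : M.tlam < n := by omega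
      have h2 : (M.tlam:ℝ) < (n:ℝ) := by exact_mod_cast h1
      linarith
    unfold PricingModel.mubar
    rw [div_le_iff₀ hnpos]
    have hterm : ∀ s ∈ Finset.Icc (M.tlam+1) n,
        (if M.buy s ω = true ∧ M.θ k ≤ M.θ (M.itype s ω) ∧ M.itype s ω ∈ M.Qset ω
          then M.θ k else 0) ≤ M.θ k * Xi M (M.Qset ω) k s ω := by
      intro s _
      by_cases hc : M.θ k ≤ M.θ (M.itype s ω) ∧ M.itype s ω ∈ M.Qset ω
      · have hXi : Xi M (M.Qset ω) k s ω = 1 := if_pos hc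
        rw [hXi, mul_one]
        split_ifs with h
        · exact le_refl _
        · exact (M.hθ_mem k).1
      · have hXi : Xi M (M.Qset ω) k s ω = 0 := if_neg hc
        rw [hXi, mul_zero]
        split_ifs with h
        · exact absurd h.2 hc
        · exact le_refl 0
    calc (∑ s ∈ Finset.Icc (M.tlam+1) n,
            if M.buy s ω = true ∧ M.θ k ≤ M.θ (M.itype s ω) ∧ M.itype s ω ∈ M.Qset ω
            then M.θ k else 0)
        ≤ ∑ s ∈ Finset.Icc (M.tlam+1) n, M.θ k * Xi M (M.Qset ω) k s ω :=
          Finset.sum_le_sum hterm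
      _ = M.θ k * ∑ s ∈ Finset.Icc (M.tlam+1) n, Xi M (M.Qset ω) k s ω := by
          rw [Finset.mul_sum]
      _ ≤ M.θ k * (((Finset.Icc (M.tlam+1) n).card : ℝ) * (prob M (M.Qset ω) k + M.rho n)) :=
          mul_le_mul_of_nonneg_left hg.le (M.hθ_mem k).1
      _ = M.θ k * (prob M (M.Qset ω) k + M.rho n) * ((n:ℝ) - (M.tlam:ℝ)) := by
          rw [hcard_Icc M.tlam n (by omega)]; ring
  -- lower bound for mubar at jstar
  have hmu_low : ∀ n : ℕ, M.tlam + 1 ≤ n → n < t →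
      (∀ j ∈ M.Qset ω, jstar M (M.Qset ω) ≤ j → j ∈ A.S n ω) →
      M.θ (jstar M (M.Qset ω)) * (prob M (M.Qset ω) (jstar M (M.Qset ω)) - M.rho n)
        ≤ M.mubar (jstar M (M.Qset ω)) n ω := by
    intro n hn1 hn2 hPn
    have hg := (hgood n (Finset.mem_Ico.2 ⟨hn1, hn2⟩)).1
    push_neg at hg
    have hnpos : (0:ℝ) < (n:ℝ) - (M.tlam:ℝ) := by
      have h1 : M.tlam < n := by omega
      have h2 : (M.tlam:ℝ) < (n:ℝ) := by exact_mod_cast h1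
      linarith
    have hbuy : ∀ s ∈ Finset.Icc (M.tlam+1) n, M.itype s ω ∈ M.Qset ω →
        jstar M (M.Qset ω) ≤ M.itype s ω → M.buy s ω = true := by
      intro s hs hQs hjs
      obtain ⟨hs1, hs2⟩ := Finset.mem_Icc.1 hs
      have hmemn : M.itype s ω ∈ A.S n ω := hPn _ hQs hjs
      have hmem : M.itype s ω ∈ A.S s ω := hSanti s n hs1 hs2 hmemn
      exact hbuyL s (by omega) (by omega) hmem
    unfold PricingModel.mubar
    rw [le_div_iff₀ hnpos]
    have hterm : ∀ s ∈ Finset.Icc (M.tlam+1) n,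
        M.θ (jstar M (M.Qset ω)) * Xi M (M.Qset ω) (jstar M (M.Qset ω)) s ω ≤
        (if M.buy s ω = true ∧ M.θ (jstar M (M.Qset ω)) ≤ M.θ (M.itype s ω) ∧
            M.itype s ω ∈ M.Qset ω then M.θ (jstar M (M.Qset ω)) else 0) := by
      intro s hs
      by_cases hc : M.θ (jstar M (M.Qset ω)) ≤ M.θ (M.itype s ω) ∧ M.itype s ω ∈ M.Qset ω
      · have hXi : Xi M (M.Qset ω) (jstar M (M.Qset ω)) s ω = 1 := if_pos hc
        have hjs : jstar M (M.Qset ω) ≤ M.itype s ω :=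
          (jstar_iff M hjstie hc.2).1 hc.1
        have hb := hbuy s hs hc.2 hjs
        rw [hXi, mul_one, if_pos ⟨hb, hc⟩]
      · have hXi : Xi M (M.Qset ω) (jstar M (M.Qset ω)) s ω = 0 := if_neg hc
        rw [hXi, mul_zero]
        split_ifs with h
        · exact (M.hθ_mem _).1
        · exact le_refl 0
    calc M.θ (jstar M (M.Qset ω)) * (prob M (M.Qset ω) (jstar M (M.Qset ω)) - M.rho n) *
            ((n:ℝ) - (M.tlam:ℝ))
        = M.θ (jstar M (M.Qset ω)) * (((Finset.Icc (M.tlam+1) n).card : ℝ) *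
            (prob M (M.Qset ω) (jstar M (M.Qset ω)) - M.rho n)) := by
          rw [hcard_Icc M.tlam n (by omega)]; ring
      _ ≤ M.θ (jstar M (M.Qset ω)) *
            ∑ s ∈ Finset.Icc (M.tlam+1) n, Xi M (M.Qset ω) (jstar M (M.Qset ω)) s ω :=
          mul_le_mul_of_nonneg_left hg.le (M.hθ_mem _).1
      _ = ∑ s ∈ Finset.Icc (M.tlam+1) n,
            M.θ (jstar M (M.Qset ω)) * Xi M (M.Qset ω) (jstar M (M.Qset ω)) s ω := by
          rw [Finset.mul_sum]
      _ ≤ _ := Finset.sum_le_sum hterm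
  -- muhat lower bound at jstar
  have hmuhat : ∀ n : ℕ, M.tlam + 1 ≤ n → n < t →
      (∀ j ∈ M.Qset ω, jstar M (M.Qset ω) ≤ j → j ∈ A.S n ω) →
      revF M (M.θ (jstar M (M.Qset ω))) (M.Qset ω) ≤ M.muhat (jstar M (M.Qset ω)) n ω := by
    intro n hn1 hn2 hPn
    have hlow := hmu_low n hn1 hn2 hPn
    have hρ := rho_nonneg M n
    have hθ0 := (M.hθ_mem (jstar M (M.Qset ω))).1
    have hθ1 := (M.hθ_mem (jstar M (M.Qset ω))).2
    unfold PricingModel.muhat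
    rw [revF_theta_eq]
    nlinarith
  -- the main induction
  have hPred : ∀ n : ℕ, M.tlam + 1 ≤ n → n ≤ t →
      ∀ j ∈ M.Qset ω, jstar M (M.Qset ω) ≤ j → j ∈ A.S n ω := by
    intro n hn1
    induction n, hn1 using Nat.le_induction with
    | base =>
      intro _ j hjQ _
      rw [A.h_S_init ω]
      exact hjQ
    | succ n hn ih =>
      intro hn2 j hjQ hjsj
      have hnt : n < t := by omega
      have Pn := ih (by omega)
      have key : ∀ k ∈ A.S n ω, M.mucheck k n ω ≤ M.muhat (jstar M (M.Qset ω)) n ω := by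
        intro k hk
        have hmh := hmuhat n hn hnt Pn
        have hρ := rho_nonneg M n
        by_cases hθk : M.θ k = M.θ (jstar M (M.Qset ω))
        · have hmeq : M.mubar k n ω = M.mubar (jstar M (M.Qset ω)) n ω := by
            unfold PricingModel.mubar
            rw [hθk]
          unfold PricingModel.mucheck PricingModel.muhat
          unfold PricingModel.muhat at hmh
          rw [hmeq]
          linarith
        · have hup := hmu_up k n hn hnt hθk
          have hrevk := hjsmax' k
          unfold PricingModel.mucheck
          have hk1 : M.mubar k n ω ≤ revF M (M.θ k) (M.Qset ω) + M.rho n := by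
            rw [revF_theta_eq]
            nlinarith [(M.hθ_mem k).1, (M.hθ_mem k).2, hρ, prob_nonneg M (M.Qset ω) k]
          linarith
      rw [A.h_S_step n ω (by omega)]
      exact Finset.mem_filter.2 ⟨Pn j hjQ hjsj,
        ⟨jstar M (M.Qset ω), Pn _ hjsQ le_rfl, hjsj, key⟩⟩
  -- conclusion
  intro s hs
  obtain ⟨hs1, hs2⟩ := Finset.mem_Icc.1 hs
  have hPs := hPred s hs1 hs2
  have hjsS : jstar M (M.Qset ω) ∈ A.S s ω := hPs _ hjsQ le_rfl
  have hiQS : iQ ω ∈ A.S s ω := hPs _ hiQQ hjsle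
  refine ⟨hiQS, ?_⟩
  have hne : (A.S s ω).Nonempty := ⟨_, hjsS⟩
  refine ⟨(A.S s ω).min' hne, Finset.min'_mem _ _, fun k hk => Finset.min'_le _ k hk, ?_⟩
  rcases eq_or_lt_of_le hs1 with heq | hlt
  · -- s = tlam + 1
    have hs1' : s - 1 = M.tlam := by omega
    rw [hs1']
    have hρ' : M.rho' M.tlam = 1 := if_pos rfl
    rw [hρ']
    have h1 : M.revQ (pQ ω) ω ≤ 1 := by
      rw [← hrevjs]
      exact revF_theta_le_one M (M.Qset ω) _
    have h2 : 0 ≤ M.revQ (M.θ ((A.S s ω).min' hne)) ω := by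
      rw [revQ_eq_revF]
      exact revF_theta_nonneg M (M.Qset ω) _
    linarith
  · -- s ≥ tlam + 2
    obtain ⟨s', rfl⟩ : ∃ s', s = s' + 1 := ⟨s - 1, by omega⟩
    have hs1'' : s' + 1 - 1 = s' := by omega
    rw [hs1'']
    have hs'1 : M.tlam + 1 ≤ s' := by omega
    have hs't : s' < t := by omega
    have hρ'eq : M.rho' s' = M.rho s' := if_neg (by omega)
    rw [hρ'eq]
    have hρ := rho_nonneg M s'
    set j := (A.S (s'+1) ω).min' hne with hj_def
    have hjmem : j ∈ A.S (s'+1) ω := Finset.min'_mem _ _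
    rw [A.h_S_step s' ω (by omega)] at hjmem
    obtain ⟨hjS', j'', hj''S', hj''le, hkey⟩ := Finset.mem_filter.1 hjmem
    have hj''S : j'' ∈ A.S (s'+1) ω := by
      rw [A.h_S_step s' ω (by omega)]
      exact Finset.mem_filter.2 ⟨hj''S', ⟨j'', hj''S', le_rfl, hkey⟩⟩
    have hjj'' : j = j'' := le_antisymm hj''le (Finset.min'_le _ _ hj''S) |>.symm
    rw [← hjj''] at hkey
    have hPs' := hPred s' hs'1 (by omega)
    have hjsS' : jstar M (M.Qset ω) ∈ A.S s' ω := hPs' _ hjsQ le_rfl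
    have hkeyjs := hkey _ hjsS'
    -- mucheck jstar s' ≥ revF(θ js) − 2ρ
    have hlow := hmu_low s' hs'1 hs't hPs'
    have hθ0 := (M.hθ_mem (jstar M (M.Qset ω))).1
    have hθ1 := (M.hθ_mem (jstar M (M.Qset ω))).2
    have hcheck : revF M (M.θ (jstar M (M.Qset ω))) (M.Qset ω) - 2 * M.rho s'
        ≤ M.mucheck (jstar M (M.Qset ω)) s' ω := by
      unfold PricingModel.mucheck
      rw [revF_theta_eq]
      nlinarith
    by_cases hθj : M.θ j = M.θ (jstar M (M.Qset ω))
    · have heq2 : M.revQ (M.θ j) ω = M.revQ (pQ ω) ω := by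
        calc M.revQ (M.θ j) ω = revF M (M.θ j) (M.Qset ω) := rfl
          _ = revF M (M.θ (jstar M (M.Qset ω))) (M.Qset ω) := revF_congr M hθj
          _ = M.revQ (pQ ω) ω := hrevjs
      rw [heq2]
      linarith
    · have hup := hmu_up j s' hs'1 hs't hθj
      have hhat : M.muhat j s' ω ≤ revF M (M.θ j) (M.Qset ω) + 2 * M.rho s' := by
        unfold PricingModel.muhat
        rw [revF_theta_eq]
        nlinarith [(M.hθ_mem j).1, (M.hθ_mem j).2, prob_nonneg M (M.Qset ω) j]
      rw [revQ_eq_revF, revQ_eq_revF, ← hθiQ ω]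
      have hfin : revF M (M.θ (iQ ω)) (M.Qset ω) = revF M (M.θ (jstar M (M.Qset ω))) (M.Qset ω) := by
        apply le_antisymm (hjsmax (iQ ω) hiQQ) (hmax0 _ hjsQ)
      rw [hfin]
      linarith

end SEP

namespace SEP

variable {Ω : Type} [MeasurableSpace Ω] (M : PricingModel Ω)

noncomputable def Z (s : ℕ) (ω : Ω) : Fin M.d × (Fin M.d → ℝ) :=
  (M.itype s ω, fun i => M.vdraw s i ω)

lemma Z_meas (s : ℕ) : Measurable (Z M s) :=
  (M.h_itype_meas s).prodMk (measurable_pi_lambda _ (M.h_vdraw_meas s))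

lemma Z_indep : iIndepFun (Z M) M.Pr := M.h_indep

noncomputable def gind (Q₀ : Finset (Fin M.d)) (i : Fin M.d) :
    Fin M.d × (Fin M.d → ℝ) → ℝ :=
  fun x => if M.θ i ≤ M.θ x.1 ∧ x.1 ∈ Q₀ then 1 else 0

lemma gind_meas (Q₀ : Finset (Fin M.d)) (i : Fin M.d) : Measurable (gind M Q₀ i) := by
  have hset : MeasurableSet {x : Fin M.d × (Fin M.d → ℝ) | M.θ i ≤ M.θ x.1 ∧ x.1 ∈ Q₀} := by
    have h1 : {x : Fin M.d × (Fin M.d → ℝ) | M.θ i ≤ M.θ x.1 ∧ x.1 ∈ Q₀}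
        = Prod.fst ⁻¹' {j : Fin M.d | M.θ i ≤ M.θ j ∧ j ∈ Q₀} := rfl
    rw [h1]
    exact measurable_fst ((Set.toFinite _).measurableSet)
  exact Measurable.ite hset measurable_const measurable_const

lemma Xi_indep (Q₀ : Finset (Fin M.d)) (i : Fin M.d) :
    iIndepFun (fun s => Xi M Q₀ i s) M.Pr :=
  (Z_indep M).comp (fun _ => gind M Q₀ i) (fun _ => gind_meas M Q₀ i)

lemma Xi_meas (Q₀ : Finset (Fin M.d)) (i : Fin M.d) (s : ℕ) : Measurable (Xi M Q₀ i s) :=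
  (gind_meas M Q₀ i).comp (Z_meas M s)

lemma Xi_01 (Q₀ : Finset (Fin M.d)) (i : Fin M.d) (s : ℕ) (ω : Ω) :
    Xi M Q₀ i s ω = 0 ∨ Xi M Q₀ i s ω = 1 := by
  unfold Xi
  split_ifs
  · right; rfl
  · left; rfl

lemma integral_Xi (Q₀ : Finset (Fin M.d)) (i : Fin M.d) (s : ℕ) :
    ∫ ω, Xi M Q₀ i s ω ∂M.Pr = prob M Q₀ i := by
  classical
  haveI := M.hPr
  have hJmeas : MeasurableSet ((Finset.univ.filter
      (fun j : Fin M.d => M.θ i ≤ M.θ j ∧ j ∈ Q₀) : Finset (Fin M.d)) : Set (Fin M.d)) :=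
    (Set.toFinite _).measurableSet
  have hXind : (fun ω => Xi M Q₀ i s ω)
      = (M.itype s ⁻¹' ((Finset.univ.filter
          (fun j : Fin M.d => M.θ i ≤ M.θ j ∧ j ∈ Q₀) : Finset (Fin M.d)) : Set (Fin M.d))).indicator
          (fun _ => (1:ℝ)) := by
    ext ω
    simp [Xi, Set.indicator_apply]
  rw [hXind, integral_indicator_const (1:ℝ) ((M.h_itype_meas s) hJmeas)]
  have hdecomp : (M.itype s ⁻¹' ((Finset.univ.filter
      (fun j : Fin M.d => M.θ i ≤ M.θ j ∧ j ∈ Q₀) : Finset (Fin M.d)) : Set (Fin M.d)))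
      = ⋃ j ∈ (Finset.univ.filter (fun j : Fin M.d => M.θ i ≤ M.θ j ∧ j ∈ Q₀)),
          {ω | M.itype s ω = j} := by
    ext ω
    simp [Set.mem_preimage]
  have hmeasval : M.Pr (M.itype s ⁻¹' ((Finset.univ.filter
      (fun j : Fin M.d => M.θ i ≤ M.θ j ∧ j ∈ Q₀) : Finset (Fin M.d)) : Set (Fin M.d)))
      = ENNReal.ofReal (prob M Q₀ i) := by
    rw [hdecomp, measure_biUnion_finset ?_ ?_]
    · have h1 : ∀ j ∈ Finset.univ.filter (fun j : Fin M.d => M.θ i ≤ M.θ j ∧ j ∈ Q₀),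
          M.Pr {ω | M.itype s ω = j} = ENNReal.ofReal (M.q j) := fun j _ => M.h_itype_law s j
      rw [Finset.sum_congr rfl h1, ← ENNReal.ofReal_sum_of_nonneg (fun j _ => M.hq_nonneg j)]
      congr 1
      rw [prob, Finset.sum_filter]
    · intro a _ b _ hab
      simp only [Function.onFun, Set.disjoint_left]
      intro ω h1 h2
      exact hab (by rw [Set.mem_setOf_eq] at h1 h2; rw [← h1, h2])
    · intro j _
      exact (M.h_itype_meas s) (measurableSet_singleton j)
  rw [measureReal_def, hmeasval, smul_eq_mul, mul_one, ENNReal.toReal_ofReal (prob_nonneg M Q₀ i)]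

lemma exp_bound (t' : ℕ) (ht' : M.tlam + 1 ≤ t') :
    Real.exp (-2 * ((Finset.Icc (M.tlam+1) t').card : ℝ) * (M.rho t') ^ 2)
      = 1 / ((M.d : ℝ) * (M.T : ℝ) ^ 2) := by
  have hd : (1:ℝ) ≤ (M.d:ℝ) := by exact_mod_cast M.hd
  have hT : (1:ℝ) ≤ (M.T:ℝ) := by exact_mod_cast M.hT
  have hdT : (1:ℝ) ≤ (M.d:ℝ) * (M.T:ℝ)^2 := by nlinarith
  have hcard := hcard_Icc M.tlam t' (by omega)
  have hnpos : (0:ℝ) < (t':ℝ) - (M.tlam:ℝ) := by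
    have h2 : (M.tlam:ℝ) < (t':ℝ) := by exact_mod_cast (by omega : M.tlam < t')
    linarith
  have hρsq : (M.rho t')^2 = Real.log ((M.d:ℝ) * (M.T:ℝ)^2) / (2 * ((t':ℝ) - (M.tlam:ℝ))) := by
    unfold PricingModel.rho
    rw [Real.sq_sqrt]
    have hL : 0 ≤ Real.log ((M.d:ℝ) * (M.T:ℝ)^2) := Real.log_nonneg hdT
    positivity
  rw [hcard, hρsq]
  have harg : -2 * ((t':ℝ) - (M.tlam:ℝ)) *
      (Real.log ((M.d:ℝ)*(M.T:ℝ)^2) / (2*((t':ℝ) - (M.tlam:ℝ))))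
      = - Real.log ((M.d:ℝ)*(M.T:ℝ)^2) := by
    field_simp
  rw [harg, Real.exp_neg, Real.exp_log (by linarith : (0:ℝ) < (M.d:ℝ)*(M.T:ℝ)^2), one_div]

lemma Pr_Up_le (Q₀ : Finset (Fin M.d)) (k : Fin M.d) (t' : ℕ) (ht' : M.tlam + 1 ≤ t') :
    M.Pr {ω | ((Finset.Icc (M.tlam+1) t').card : ℝ) * (prob M Q₀ k + M.rho t')
        ≤ ∑ s ∈ Finset.Icc (M.tlam+1) t', Xi M Q₀ k s ω}
      ≤ ENNReal.ofReal (1 / ((M.d:ℝ) * (M.T:ℝ)^2)) := by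
  have h := SEP.chernoff_indicator (μ := M.Pr) (fun s => Xi M Q₀ k s) (Xi_indep M Q₀ k)
    (Xi_meas M Q₀ k) (Xi_01 M Q₀ k) (Finset.Icc (M.tlam+1) t')
    (prob_nonneg M Q₀ k) (prob_le_one M Q₀ k) (fun s _ => integral_Xi M Q₀ k s)
    (rho_nonneg M t')
  rwa [exp_bound M t' ht'] at h

lemma Pr_Low_le (Q₀ : Finset (Fin M.d)) (k : Fin M.d) (t' : ℕ) (ht' : M.tlam + 1 ≤ t') :
    M.Pr {ω | ∑ s ∈ Finset.Icc (M.tlam+1) t', Xi M Q₀ k s ω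
        ≤ ((Finset.Icc (M.tlam+1) t').card : ℝ) * (prob M Q₀ k - M.rho t')}
      ≤ ENNReal.ofReal (1 / ((M.d:ℝ) * (M.T:ℝ)^2)) := by
  have h := SEP.chernoff_indicator_lower (μ := M.Pr) (fun s => Xi M Q₀ k s) (Xi_indep M Q₀ k)
    (Xi_meas M Q₀ k) (Xi_01 M Q₀ k) (Finset.Icc (M.tlam+1) t')
    (prob_nonneg M Q₀ k) (prob_le_one M Q₀ k) (fun s _ => integral_Xi M Q₀ k s)
    (rho_nonneg M t')
  rwa [exp_bound M t' ht'] at h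

end SEP

namespace SEP

variable {Ω : Type} [MeasurableSpace Ω] (M : PricingModel Ω)

noncomputable def tupleMap (I : Finset ℕ) : Ω → (↥I → Fin M.d × (Fin M.d → ℝ)) :=
  fun ω s => Z M (s : ℕ) ω

lemma tupleMap_meas (I : Finset ℕ) : Measurable (tupleMap M I) :=
  measurable_pi_lambda _ (fun s => Z_meas M (s : ℕ))

/-- `Qset` as a function of the phase-1 tuple. -/
noncomputable def QSfun (v : ↥(Finset.Icc 1 M.tlam) → Fin M.d × (Fin M.d → ℝ)) :
    Finset (Fin M.d) :=
  Finset.univ.filter (fun i => 3 * M.lam / 4 ≤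
    (∑ s ∈ (Finset.Icc 1 M.tlam).attach, if (v s).1 = i then (1:ℝ) else 0) / (M.tlam : ℝ))

lemma QS_comp (ω : Ω) : QSfun M (tupleMap M (Finset.Icc 1 M.tlam) ω) = M.Qset ω := by
  classical
  have key : ∀ i : Fin M.d,
      (∑ s ∈ (Finset.Icc 1 M.tlam).attach,
        if (tupleMap M (Finset.Icc 1 M.tlam) ω s).1 = i then (1:ℝ) else 0) / (M.tlam : ℝ)
      = M.qbar i ω := by
    intro i
    unfold PricingModel.qbar
    congr 1
    show (∑ s ∈ (Finset.Icc 1 M.tlam).attach, if M.itype (↑s) ω = i then (1:ℝ) else 0) = _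
    rw [Finset.sum_attach (Finset.Icc 1 M.tlam) (fun s => if M.itype s ω = i then (1:ℝ) else 0)]
    rw [Finset.card_filter]
    push_cast
    rfl
  unfold QSfun PricingModel.Qset
  ext i
  simp only [Finset.mem_filter, Finset.mem_univ, true_and]
  rw [key i]

lemma QE_preimage (Q₀ : Finset (Fin M.d)) :
    {ω | M.Qset ω = Q₀} = tupleMap M (Finset.Icc 1 M.tlam) ⁻¹' {v | QSfun M v = Q₀} := by
  ext ω
  simp only [Set.mem_setOf_eq, Set.mem_preimage, QS_comp]

lemma QSset_meas (Q₀ : Finset (Fin M.d)) : MeasurableSet {v | QSfun M v = Q₀} := by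
  classical
  have hdec : {v | QSfun M v = Q₀} = ⋂ i : Fin M.d,
      {v : ↥(Finset.Icc 1 M.tlam) → Fin M.d × (Fin M.d → ℝ) |
        i ∈ Q₀ ↔ 3 * M.lam / 4 ≤
          (∑ s ∈ (Finset.Icc 1 M.tlam).attach, if (v s).1 = i then (1:ℝ) else 0) / (M.tlam : ℝ)} := by
    ext v
    simp only [Set.mem_setOf_eq, Set.mem_iInter]
    constructor
    · intro h i
      rw [← h]
      simp [QSfun]
    · intro h
      ext i
      simp only [QSfun, Finset.mem_filter, Finset.mem_univ, true_and]
      exact (h i).symm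
  rw [hdec]
  apply MeasurableSet.iInter
  intro i
  have hmf : Measurable (fun v : ↥(Finset.Icc 1 M.tlam) → Fin M.d × (Fin M.d → ℝ) =>
      (∑ s ∈ (Finset.Icc 1 M.tlam).attach, if (v s).1 = i then (1:ℝ) else 0) / (M.tlam : ℝ)) := by
    apply Measurable.div_const
    apply Finset.measurable_sum
    intro s _
    have h1 : Measurable (fun v : ↥(Finset.Icc 1 M.tlam) → Fin M.d × (Fin M.d → ℝ) =>
        (v s).1) := measurable_fst.comp (measurable_pi_apply s)
    exact Measurable.ite (h1 (measurableSet_singleton i)) measurable_const measurable_const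
  by_cases hi : i ∈ Q₀
  · have h2 : {v : ↥(Finset.Icc 1 M.tlam) → Fin M.d × (Fin M.d → ℝ) |
        i ∈ Q₀ ↔ 3 * M.lam / 4 ≤
          (∑ s ∈ (Finset.Icc 1 M.tlam).attach, if (v s).1 = i then (1:ℝ) else 0) / (M.tlam : ℝ)}
        = {v | 3 * M.lam / 4 ≤
          (∑ s ∈ (Finset.Icc 1 M.tlam).attach, if (v s).1 = i then (1:ℝ) else 0) / (M.tlam : ℝ)} := by
      ext v
      simp [hi]
    rw [h2]
    exact measurableSet_le measurable_const hmf
  · have h2 : {v : ↥(Finset.Icc 1 M.tlam) → Fin M.d × (Fin M.d → ℝ) |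
        i ∈ Q₀ ↔ 3 * M.lam / 4 ≤
          (∑ s ∈ (Finset.Icc 1 M.tlam).attach, if (v s).1 = i then (1:ℝ) else 0) / (M.tlam : ℝ)}
        = {v | 3 * M.lam / 4 ≤
          (∑ s ∈ (Finset.Icc 1 M.tlam).attach, if (v s).1 = i then (1:ℝ) else 0) / (M.tlam : ℝ)}ᶜ := by
      ext v
      simp [hi]
    rw [h2]
    exact (measurableSet_le measurable_const hmf).compl

lemma QE_meas (Q₀ : Finset (Fin M.d)) : MeasurableSet {ω | M.Qset ω = Q₀} := by
  rw [QE_preimage]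
  exact tupleMap_meas M _ (QSset_meas M Q₀)

lemma factor (I2 : Finset ℕ) (hI2 : ∀ s ∈ I2, M.tlam < s) (Q₀ : Finset (Fin M.d))
    (C : Set (↥I2 → Fin M.d × (Fin M.d → ℝ))) (hC : MeasurableSet C) :
    M.Pr ({ω | M.Qset ω = Q₀} ∩ tupleMap M I2 ⁻¹' C)
      = M.Pr {ω | M.Qset ω = Q₀} * M.Pr (tupleMap M I2 ⁻¹' C) := by
  have hdisj : Disjoint (Finset.Icc 1 M.tlam) I2 := by
    rw [Finset.disjoint_left]
    intro s hs1 hs2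
    have h1 := Finset.mem_Icc.1 hs1
    have h2 := hI2 s hs2
    omega
  have hIF := (Z_indep M).indepFun_finset (Finset.Icc 1 M.tlam) I2 hdisj (Z_meas M)
  have h := (indepFun_iff_measure_inter_preimage_eq_mul.1 hIF)
    {v | QSfun M v = Q₀} C (QSset_meas M Q₀) hC
  rw [QE_preimage M Q₀]
  exact h

/-- the `Up` event as a preimage. -/
lemma Up_preimage (Q₀ : Finset (Fin M.d)) (k : Fin M.d) (t' : ℕ) (c : ℝ) :
    {ω | c ≤ ∑ s ∈ Finset.Icc (M.tlam+1) t', Xi M Q₀ k s ω}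
      = tupleMap M (Finset.Icc (M.tlam+1) t') ⁻¹'
        {v | c ≤ ∑ s ∈ (Finset.Icc (M.tlam+1) t').attach, gind M Q₀ k (v s)} := by
  ext ω
  simp only [Set.mem_setOf_eq, Set.mem_preimage]
  show _ ↔ c ≤ ∑ s ∈ (Finset.Icc (M.tlam+1) t').attach, gind M Q₀ k (Z M (↑s) ω)
  rw [Finset.sum_attach (Finset.Icc (M.tlam+1) t') (fun n => gind M Q₀ k (Z M n ω))]
  rfl

lemma Low_preimage (Q₀ : Finset (Fin M.d)) (k : Fin M.d) (t' : ℕ) (c : ℝ) :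
    {ω | ∑ s ∈ Finset.Icc (M.tlam+1) t', Xi M Q₀ k s ω ≤ c}
      = tupleMap M (Finset.Icc (M.tlam+1) t') ⁻¹'
        {v | ∑ s ∈ (Finset.Icc (M.tlam+1) t').attach, gind M Q₀ k (v s) ≤ c} := by
  ext ω
  simp only [Set.mem_setOf_eq, Set.mem_preimage]
  show _ ↔ (∑ s ∈ (Finset.Icc (M.tlam+1) t').attach, gind M Q₀ k (Z M (↑s) ω)) ≤ c
  rw [Finset.sum_attach (Finset.Icc (M.tlam+1) t') (fun n => gind M Q₀ k (Z M n ω))]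
  rfl

lemma sum_gind_meas (Q₀ : Finset (Fin M.d)) (k : Fin M.d) (t' : ℕ) :
    Measurable (fun v : ↥(Finset.Icc (M.tlam+1) t') → Fin M.d × (Fin M.d → ℝ) =>
      ∑ s ∈ (Finset.Icc (M.tlam+1) t').attach, gind M Q₀ k (v s)) := by
  apply Finset.measurable_sum
  intro s _
  exact (gind_meas M Q₀ k).comp (measurable_pi_apply s)

/-- combined bound for `Q=Q₀` intersected with an upper deviation. -/
lemma Pr_QE_Up (Q₀ : Finset (Fin M.d)) (k : Fin M.d) (t' : ℕ) (ht' : M.tlam + 1 ≤ t') :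
    M.Pr ({ω | M.Qset ω = Q₀} ∩
        {ω | ((Finset.Icc (M.tlam+1) t').card : ℝ) * (prob M Q₀ k + M.rho t')
          ≤ ∑ s ∈ Finset.Icc (M.tlam+1) t', Xi M Q₀ k s ω})
      ≤ M.Pr {ω | M.Qset ω = Q₀} * ENNReal.ofReal (1 / ((M.d:ℝ) * (M.T:ℝ)^2)) := by
  rw [Up_preimage M Q₀ k t']
  rw [factor M (Finset.Icc (M.tlam+1) t') (fun s hs => by have := (Finset.mem_Icc.1 hs).1; omega)
    Q₀ _ (measurableSet_le measurable_const (sum_gind_meas M Q₀ k t'))]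
  apply mul_le_mul_right
  rw [← Up_preimage M Q₀ k t']
  exact Pr_Up_le M Q₀ k t' ht'

lemma Pr_QE_Low (Q₀ : Finset (Fin M.d)) (k : Fin M.d) (t' : ℕ) (ht' : M.tlam + 1 ≤ t') :
    M.Pr ({ω | M.Qset ω = Q₀} ∩
        {ω | ∑ s ∈ Finset.Icc (M.tlam+1) t', Xi M Q₀ k s ω
          ≤ ((Finset.Icc (M.tlam+1) t').card : ℝ) * (prob M Q₀ k - M.rho t')})
      ≤ M.Pr {ω | M.Qset ω = Q₀} * ENNReal.ofReal (1 / ((M.d:ℝ) * (M.T:ℝ)^2)) := by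
  rw [Low_preimage M Q₀ k t']
  rw [factor M (Finset.Icc (M.tlam+1) t') (fun s hs => by have := (Finset.mem_Icc.1 hs).1; omega)
    Q₀ _ (measurableSet_le (sum_gind_meas M Q₀ k t') measurable_const)]
  apply mul_le_mul_right
  rw [← Low_preimage M Q₀ k t']
  exact Pr_Low_le M Q₀ k t' ht'

lemma sum_QE : ∑ Q₀ ∈ (Finset.univ : Finset (Finset (Fin M.d))), M.Pr {ω | M.Qset ω = Q₀} = 1 := by
  classical
  haveI := M.hPr
  rw [← measure_biUnion_finset ?_ (fun Q₀ _ => QE_meas M Q₀)]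
  · have h1 : ⋃ Q₀ ∈ (Finset.univ : Finset (Finset (Fin M.d))), {ω | M.Qset ω = Q₀}
        = Set.univ := by
      ext ω
      simp
    rw [h1, measure_univ]
  · intro a _ b _ hab
    simp only [Function.onFun, Set.disjoint_left]
    intro ω h1 h2
    rw [Set.mem_setOf_eq] at h1 h2
    exact hab (by rw [← h1, h2])

end SEP

/-- the successive-elimination events.  Let `p*(Q)` maximize
`rev(·, Q)` with `θ_{i_Q} = p*(Q)`, `i_Q ∈ Q`; `B_s` is the event that `i_Q ∈ S_s`
and `rev(p*(Q),Q) − rev(θ_{j_s},Q) ≤ 4 ρ_{s−1}` where `j_s = min S_s` (and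
`ρ_{t_λ} = 1` by convention); `C_t = ∩_{s=t_λ+1}^t B_s`.  Then `Pr(C_tᶜ) ≤ 1/T`. -/
theorem lemma_successive_elimination :
    ∀ (Ω : Type) [MeasurableSpace Ω] (M : PricingModel Ω) (A : Algorithm M),
      M.Pessimistic → M.BuyerRule → M.TauAdapted →
      ∀ (pQ : Ω → ℝ) (iQ : Ω → Fin M.d),
        (∀ ω, iQ ω ∈ M.Qset ω) →
        (∀ ω, M.θ (iQ ω) = pQ ω) →
        (∀ ω p, M.revQ p ω ≤ M.revQ (pQ ω) ω) →
        ∀ t, M.tlam < t → t ≤ M.T →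
          M.Pr {ω | ¬ ∀ s ∈ Finset.Icc (M.tlam + 1) t,
              iQ ω ∈ A.S s ω ∧
              ∃ j ∈ A.S s ω, (∀ k ∈ A.S s ω, j ≤ k) ∧
                M.revQ (pQ ω) ω - M.revQ (M.θ j) ω ≤ 4 * M.rho' (s - 1)}
            ≤ 1 / (M.T : ℝ≥0∞) := by
  intro Ω _inst M A hP hBR _hTau pQ iQ hiQ hθiQ hopt t ht1 ht2
  classical
  haveI := M.hPr
  have hKcard : ∀ Q₀ : Finset (Fin M.d),
      ((Finset.univ.filter (fun k : Fin M.d => M.θ k ≠ M.θ (SEP.jstar M Q₀))).card + 1 ≤ M.d) := by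
    intro Q₀
    have hsub : (Finset.univ.filter (fun k : Fin M.d => M.θ k ≠ M.θ (SEP.jstar M Q₀)))
        ⊆ Finset.univ.erase (SEP.jstar M Q₀) := by
      intro k hk
      have h1 := (Finset.mem_filter.1 hk).2
      exact Finset.mem_erase.2 ⟨fun h => h1 (by rw [h]), Finset.mem_univ k⟩
    have h2 := Finset.card_le_card hsub
    rw [Finset.card_erase_of_mem (Finset.mem_univ _), Finset.card_fin] at h2
    have := M.hd
    omega
  have hsub : {ω | ¬ ∀ s ∈ Finset.Icc (M.tlam + 1) t,
        iQ ω ∈ A.S s ω ∧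
        ∃ j ∈ A.S s ω, (∀ k ∈ A.S s ω, j ≤ k) ∧
          M.revQ (pQ ω) ω - M.revQ (M.θ j) ω ≤ 4 * M.rho' (s - 1)} ⊆
      ⋃ (Q₀ : Finset (Fin M.d)), ⋃ t' ∈ Finset.Ico (M.tlam+1) t,
        ({ω | M.Qset ω = Q₀} ∩
          ({ω | ∑ s ∈ Finset.Icc (M.tlam+1) t', SEP.Xi M Q₀ (SEP.jstar M Q₀) s ω
              ≤ ((Finset.Icc (M.tlam+1) t').card : ℝ) *
                (SEP.prob M Q₀ (SEP.jstar M Q₀) - M.rho t')}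
            ∪ ⋃ k ∈ Finset.univ.filter (fun k : Fin M.d => M.θ k ≠ M.θ (SEP.jstar M Q₀)),
              {ω | ((Finset.Icc (M.tlam+1) t').card : ℝ) * (SEP.prob M Q₀ k + M.rho t')
                ≤ ∑ s ∈ Finset.Icc (M.tlam+1) t', SEP.Xi M Q₀ k s ω})) := by
    intro ω hω
    by_contra hnot
    apply hω
    apply SEP.deterministic M A hP hBR pQ iQ hiQ hθiQ hopt t ht1 ht2 ω
    intro t' ht'
    constructor
    · intro hcon
      exact hnot (Set.mem_iUnion.2 ⟨M.Qset ω, Set.mem_iUnion₂.2 ⟨t', ht',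
        ⟨rfl, Or.inl hcon⟩⟩⟩)
    · intro k hk hcon
      exact hnot (Set.mem_iUnion.2 ⟨M.Qset ω, Set.mem_iUnion₂.2 ⟨t', ht',
        ⟨rfl, Or.inr (Set.mem_iUnion₂.2 ⟨k,
          Finset.mem_filter.2 ⟨Finset.mem_univ k, hk⟩, hcon⟩)⟩⟩⟩)
  refine le_trans (measure_mono hsub) ?_
  have hper : ∀ (Q₀ : Finset (Fin M.d)) (t' : ℕ), t' ∈ Finset.Ico (M.tlam+1) t →
      M.Pr ({ω | M.Qset ω = Q₀} ∩
          ({ω | ∑ s ∈ Finset.Icc (M.tlam+1) t', SEP.Xi M Q₀ (SEP.jstar M Q₀) s ω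
              ≤ ((Finset.Icc (M.tlam+1) t').card : ℝ) *
                (SEP.prob M Q₀ (SEP.jstar M Q₀) - M.rho t')}
            ∪ ⋃ k ∈ Finset.univ.filter (fun k : Fin M.d => M.θ k ≠ M.θ (SEP.jstar M Q₀)),
              {ω | ((Finset.Icc (M.tlam+1) t').card : ℝ) * (SEP.prob M Q₀ k + M.rho t')
                ≤ ∑ s ∈ Finset.Icc (M.tlam+1) t', SEP.Xi M Q₀ k s ω}))
        ≤ (M.d : ℝ≥0∞) * (M.Pr {ω | M.Qset ω = Q₀}
            * ENNReal.ofReal (1 / ((M.d:ℝ) * (M.T:ℝ)^2))) := by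
    intro Q₀ t' ht'
    have ht'1 : M.tlam + 1 ≤ t' := (Finset.mem_Ico.1 ht').1
    rw [Set.inter_union_distrib_left, Set.inter_iUnion₂]
    refine le_trans (measure_union_le _ _) ?_
    refine le_trans (add_le_add (SEP.Pr_QE_Low M Q₀ (SEP.jstar M Q₀) t' ht'1)
      (measure_biUnion_finset_le _ _)) ?_
    refine le_trans (add_le_add_right (Finset.sum_le_sum
      (fun k _ => SEP.Pr_QE_Up M Q₀ k t' ht'1)) _) ?_
    rw [Finset.sum_const, nsmul_eq_mul]
    have hrw : M.Pr {ω | M.Qset ω = Q₀} * ENNReal.ofReal (1 / ((M.d:ℝ) * (M.T:ℝ)^2))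
        + ((Finset.univ.filter (fun k : Fin M.d => M.θ k ≠ M.θ (SEP.jstar M Q₀))).card : ℝ≥0∞)
          * (M.Pr {ω | M.Qset ω = Q₀} * ENNReal.ofReal (1 / ((M.d:ℝ) * (M.T:ℝ)^2)))
        = (((Finset.univ.filter (fun k : Fin M.d => M.θ k ≠ M.θ (SEP.jstar M Q₀))).card : ℝ≥0∞)
            + 1) * (M.Pr {ω | M.Qset ω = Q₀} * ENNReal.ofReal (1 / ((M.d:ℝ) * (M.T:ℝ)^2))) := by
      ring
    rw [hrw]
    apply mul_le_mul_left
    have h3 := hKcard Q₀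
    have h4 : (((Finset.univ.filter (fun k : Fin M.d => M.θ k ≠ M.θ (SEP.jstar M Q₀))).card + 1 : ℕ)
        : ℝ≥0∞) ≤ ((M.d : ℕ) : ℝ≥0∞) := by exact_mod_cast h3
    push_cast at h4
    exact h4
  refine le_trans (measure_iUnion_le _) ?_
  rw [tsum_fintype]
  refine le_trans (Finset.sum_le_sum (fun Q₀ _ => le_trans (measure_biUnion_finset_le _ _)
    (Finset.sum_le_sum (fun t' ht' => hper Q₀ t' ht')))) ?_
  simp only [Finset.sum_const, nsmul_eq_mul]
  have hrw2 : ∑ Q₀ : Finset (Fin M.d), ((Finset.Ico (M.tlam+1) t).card : ℝ≥0∞)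
      * ((M.d : ℝ≥0∞) * (M.Pr {ω | M.Qset ω = Q₀}
        * ENNReal.ofReal (1 / ((M.d:ℝ) * (M.T:ℝ)^2))))
      = ((Finset.Ico (M.tlam+1) t).card : ℝ≥0∞) * (M.d : ℝ≥0∞)
        * ENNReal.ofReal (1 / ((M.d:ℝ) * (M.T:ℝ)^2))
        * ∑ Q₀ : Finset (Fin M.d), M.Pr {ω | M.Qset ω = Q₀} := by
    rw [Finset.mul_sum]
    apply Finset.sum_congr rfl
    intro Q₀ _
    ring
  rw [hrw2, SEP.sum_QE M, mul_one]
  -- final numeric bound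
  have hm : (Finset.Ico (M.tlam+1) t).card ≤ M.T := by
    rw [Nat.card_Ico]
    omega
  have hd0 : (0:ℝ) < (M.d:ℝ) := by exact_mod_cast M.hd
  have hT0 : (0:ℝ) < (M.T:ℝ) := by exact_mod_cast M.hT
  have hmT : ((Finset.Ico (M.tlam+1) t).card : ℝ) ≤ (M.T:ℝ) := by exact_mod_cast hm
  have hreal : ((Finset.Ico (M.tlam+1) t).card : ℝ) * (M.d:ℝ) * (1 / ((M.d:ℝ) * (M.T:ℝ)^2))
      ≤ 1 / (M.T:ℝ) := by
    have heq : ((Finset.Ico (M.tlam+1) t).card : ℝ) * (M.d:ℝ) * (1 / ((M.d:ℝ) * (M.T:ℝ)^2))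
        = ((Finset.Ico (M.tlam+1) t).card : ℝ) / (M.T:ℝ)^2 := by
      field_simp
    rw [heq, div_le_div_iff₀ (by positivity) hT0]
    nlinarith
  calc ((Finset.Ico (M.tlam+1) t).card : ℝ≥0∞) * (M.d : ℝ≥0∞)
        * ENNReal.ofReal (1 / ((M.d:ℝ) * (M.T:ℝ)^2))
      = ENNReal.ofReal (((Finset.Ico (M.tlam+1) t).card : ℝ) * (M.d:ℝ)
          * (1 / ((M.d:ℝ) * (M.T:ℝ)^2))) := by
        rw [← ENNReal.ofReal_natCast (Finset.Ico (M.tlam+1) t).card,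
          ← ENNReal.ofReal_natCast M.d,
          ← ENNReal.ofReal_mul (by positivity),
          ← ENNReal.ofReal_mul (by positivity)]
    _ ≤ ENNReal.ofReal (1 / (M.T:ℝ)) := ENNReal.ofReal_le_ofReal hreal
    _ = 1 / (M.T : ℝ≥0∞) := by
        rw [one_div, one_div, ← ENNReal.ofReal_natCast M.T,
          ← ENNReal.ofReal_inv_of_pos hT0]
end

section
/- Consider the online pricing model with η-pessimistic buyers, where the seller runs the two-phase pricing algorithm with parameter λ ∈ (0,1], and suppose q_min > 2λ. Let E_1 be the event that for every round t > t_λ and every active type i ∈ S_t, the number of reviews left by type-i buyers before round t is at least (1/2)·q_min·(t−1). Then Pr(E_1^c) ≤ 1/T. -/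
open MeasureTheory ProbabilityTheory Finset
open scoped ENNReal Classical

section AuxLemmas

variable {Ω : Type} [MeasurableSpace Ω] (M : PricingModel Ω) (A : Algorithm M)

/-- Number of arrivals of type `i` before round `t`. -/
noncomputable def arrCount (i : Fin M.d) (t : ℕ) (ω : Ω) : ℕ :=
  ((Finset.Ico 1 t).filter (fun s => M.itype s ω = i)).card

lemma aux_tlam_pos : 1 ≤ M.tlam := Nat.le_add_left 1 _

lemma aux_S_subset (ω : Ω) {s t : ℕ} (hs : M.tlam < s) (hst : s ≤ t) :
    A.S t ω ⊆ A.S s ω := by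
  induction t, hst using Nat.le_induction with
  | base => exact subset_rfl
  | succ t ht ih =>
    refine subset_trans ?_ ih
    rw [A.h_S_step t ω (lt_of_lt_of_le hs ht)]
    exact Finset.filter_subset _ _

lemma aux_LBi_le_LBt (ω : Ω) {t : ℕ} {i : Fin M.d} (hit : M.itype t ω = i)
    (ht1 : 1 ≤ t) (ht2 : t ≤ M.T) : M.LBi i t ω ≤ M.LBt t ω := by
  unfold PricingModel.LBi PricingModel.LBt
  rw [hit]
  by_cases h : M.nPhi i t ω = 0
  · simp [h]
  · rw [if_neg h, if_neg h]
    refine max_le_max le_rfl (sub_le_sub_left (Real.sqrt_le_sqrt ?_) _)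
    have hn : (0:ℝ) < (M.nPhi i t ω : ℝ) := by
      exact_mod_cast Nat.pos_of_ne_zero h
    have hη : (0:ℝ) < M.η := M.hη.1
    have ht0 : (0:ℝ) < (t:ℝ) / M.η := by
      apply div_pos _ hη
      exact_mod_cast ht1
    have hlog : Real.log ((t:ℝ) / M.η) ≤ Real.log ((M.T:ℝ) / M.η) := by
      apply Real.log_le_log ht0
      gcongr
    apply div_le_div_of_nonneg_right hlog (by positivity)

lemma aux_buy_active (hP : M.Pessimistic) (hB : M.BuyerRule) (ω : Ω) {t : ℕ}
    {i : Fin M.d} (ht1 : M.tlam < t) (ht2 : t ≤ M.T) (hi : i ∈ A.S t ω)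
    (hit : M.itype t ω = i) : M.buy t ω = true := by
  rw [hB t ω]
  have hne : (A.S t ω).Nonempty := ⟨i, hi⟩
  have hp := A.h_price2 t ω ht1
  rw [dif_pos hne] at hp
  have h1 : M.price t ω ≤ min (M.θ i) (M.LBi i t ω) := hp ▸ Finset.inf'_le _ hi
  have h2 : M.price t ω ≤ M.LBi i t ω := h1.trans (min_le_right _ _)
  have ht1' : 1 ≤ t := le_trans (aux_tlam_pos M) ht1.le
  exact h2.trans ((aux_LBi_le_LBt M ω hit ht1' ht2).trans (hP t ω ht1' ht2))

lemma aux_nPhi_eq_arr (hP : M.Pessimistic) (hB : M.BuyerRule) (ω : Ω) {t : ℕ}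
    {i : Fin M.d} (ht1 : M.tlam < t) (ht2 : t ≤ M.T) (hi : i ∈ A.S t ω) :
    M.nPhi i t ω = arrCount M i t ω := by
  unfold PricingModel.nPhi PricingModel.Phi arrCount
  congr 1
  apply Finset.filter_congr
  intro s hs
  rw [Finset.mem_Ico] at hs
  constructor
  · exact fun h => h.2
  · intro h
    refine ⟨?_, h⟩
    by_cases hcase : s ≤ M.tlam
    · exact A.h_phase1_buy s ω hs.1 hcase
    · push_neg at hcase
      have hiS : i ∈ A.S s ω := aux_S_subset M A ω hcase hs.2.le hi
      exact aux_buy_active M A hP hB ω hcase (hs.2.le.trans ht2) hiS h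

lemma aux_qmin_le (i : Fin M.d) : M.qmin ≤ M.q i := by
  have : Nonempty (Fin M.d) := ⟨⟨0, M.hd⟩⟩
  exact ciInf_le (Set.Finite.bddBelow (Set.finite_range _)) i

lemma aux_q_le_one (i : Fin M.d) : M.q i ≤ 1 := by
  rw [← M.hq_sum]
  exact Finset.single_le_sum (fun j _ => M.hq_nonneg j) (Finset.mem_univ i)

lemma aux_mgf_indicator (i : Fin M.d) (s : ℕ) (c : ℝ) :
    mgf (fun ω => if M.itype s ω = i then (1:ℝ) else 0) M.Pr c
      = 1 + (Real.exp c - 1) * M.q i := by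
  haveI := M.hPr
  have hA : MeasurableSet {ω | M.itype s ω = i} :=
    M.h_itype_meas s (measurableSet_singleton i)
  have hfun : (fun ω => Real.exp (c * (if M.itype s ω = i then (1:ℝ) else 0)))
      = fun ω => 1 + Set.indicator {ω | M.itype s ω = i} (fun _ => Real.exp c - 1) ω := by
    funext ω
    by_cases h : M.itype s ω = i
    · have : ω ∈ {ω | M.itype s ω = i} := h
      rw [if_pos h, Set.indicator_of_mem this, mul_one]
      ring
    · have : ω ∉ {ω | M.itype s ω = i} := h
      rw [if_neg h, Set.indicator_of_notMem this]
      simp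
  rw [mgf, hfun, integral_add (integrable_const 1) ((integrable_const _).indicator hA),
    integral_const, integral_indicator_const _ hA, measureReal_def, measureReal_def, M.h_itype_law s i, measure_univ,
    ENNReal.toReal_ofReal (M.hq_nonneg i)]
  simp [mul_comm]

lemma aux_chernoff (hq : 2 * M.lam < M.qmin) {i : Fin M.d} {t : ℕ}
    (ht1 : M.tlam < t) (ht2 : t ≤ M.T) :
    M.Pr {ω | ((arrCount M i t ω : ℝ)) < 1/2 * M.qmin * ((t:ℝ)-1)}
      ≤ ENNReal.ofReal (1 / ((M.d:ℝ) * (M.T:ℝ)^2)^2) := by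
  haveI := M.hPr
  set X : ℕ → Ω → ℝ := fun s ω => if M.itype s ω = i then 1 else 0 with hX
  have hXmeas : ∀ s, Measurable (X s) := fun s =>
    Measurable.ite (M.h_itype_meas s (measurableSet_singleton i))
      measurable_const measurable_const
  have hXindep : iIndepFun X M.Pr := by
    have hg : ∀ s : ℕ,
        Measurable (fun p : Fin M.d × (Fin M.d → ℝ) => if p.1 = i then (1:ℝ) else 0) := by
      intro s
      exact Measurable.ite (measurable_fst (measurableSet_singleton i))
        measurable_const measurable_const
    exact M.h_indep.comp _ hg
  set Sf : Ω → ℝ := ∑ s ∈ Finset.Ico 1 t, X s with hSf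
  have harr : ∀ ω, ((arrCount M i t ω : ℝ)) = Sf ω := by
    intro ω
    rw [hSf, Finset.sum_apply]
    unfold arrCount
    rw [Finset.card_filter, Nat.cast_sum]
    apply Finset.sum_congr rfl
    intro s _
    by_cases h : M.itype s ω = i <;> simp [hX, h]
  set c : ℝ := -(Real.log 2) with hc
  have hc0 : c ≤ 0 := neg_nonpos.mpr (Real.log_nonneg one_le_two)
  have hSnonneg : ∀ ω, 0 ≤ Sf ω := by
    intro ω
    rw [hSf, Finset.sum_apply]
    apply Finset.sum_nonneg
    intro s _
    by_cases h : M.itype s ω = i <;> simp [hX, h]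
  have hSmeas : Measurable Sf := by
    have : Sf = fun ω => ∑ s ∈ Finset.Ico 1 t, X s ω := by
      funext ω; rw [hSf, Finset.sum_apply]
    rw [this]
    exact Finset.measurable_sum _ (fun s _ => hXmeas s)
  have hint : Integrable (fun ω => Real.exp (c * Sf ω)) M.Pr := by
    refine Integrable.mono' (integrable_const 1)
      ((hSmeas.const_mul c).exp.aestronglyMeasurable) ?_
    refine Filter.Eventually.of_forall (fun ω => ?_)
    rw [Real.norm_eq_abs, abs_of_pos (Real.exp_pos _), ← Real.exp_zero]
    exact Real.exp_le_exp.mpr (mul_nonpos_of_nonpos_of_nonneg hc0 (hSnonneg ω))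
  set ε : ℝ := 1/2 * M.qmin * ((t:ℝ)-1) with hε
  have hch := measure_le_le_exp_mul_mgf (μ := M.Pr) (X := Sf) ε hc0 hint
  -- compute the mgf
  have hmgf : mgf Sf M.Pr c = (1 + (Real.exp c - 1) * M.q i) ^ (t - 1) := by
    rw [hSf, hXindep.mgf_sum hXmeas]
    rw [Finset.prod_congr rfl (fun s _ => aux_mgf_indicator M i s c),
      Finset.prod_const, Nat.card_Ico]
  -- numbers
  set L : ℝ := Real.log ((M.d:ℝ) * (M.T:ℝ)^2) with hL
  have hd1 : (1:ℝ) ≤ (M.d:ℝ) := by exact_mod_cast M.hd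
  have hT1 : (1:ℝ) ≤ (M.T:ℝ) := by exact_mod_cast M.hT
  have hx1 : (1:ℝ) ≤ (M.d:ℝ) * (M.T:ℝ)^2 := by nlinarith
  have hL0 : 0 ≤ L := Real.log_nonneg hx1
  have hlam0 : 0 < M.lam := M.hlam.1
  have hqm0 : 0 < M.qmin := by linarith
  have hqi : M.qmin ≤ M.q i := aux_qmin_le M i
  have hq1 : M.q i ≤ 1 := aux_q_le_one M i
  have htlam : 32 * L / M.lam ≤ (M.tlam : ℝ) := by
    have h1 := Nat.le_ceil (32 * L / M.lam)
    unfold PricingModel.tlam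
    push_cast
    rw [← hL]
    linarith
  have hn : (M.tlam : ℝ) ≤ (t:ℝ) - 1 := by
    have : (M.tlam + 1 : ℝ) ≤ (t:ℝ) := by exact_mod_cast ht1
    linarith
  have hnn : (0:ℝ) ≤ (t:ℝ) - 1 := by
    have h0 : (0:ℝ) ≤ 32 * L / M.lam := by positivity
    linarith
  have hcast : ((t - 1 : ℕ) : ℝ) = (t:ℝ) - 1 := by
    have : 1 ≤ t := le_trans (aux_tlam_pos M) ht1.le
    push_cast [this]
    ring
  -- the real bound
  have hlog2 : Real.log 2 < 0.6931471808 := Real.log_two_lt_d9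
  have hlog2' : 0 ≤ Real.log 2 := Real.log_nonneg one_le_two
  have hexpc : Real.exp c = 1/2 := by
    rw [hc, Real.exp_neg, Real.exp_log two_pos]
    norm_num
  have hexpo : Real.log 2 * ε + ((t:ℝ) - 1) * (-(M.q i / 2)) ≤ -(2 * L) := by
    have h64 : 64 * L ≤ M.qmin * ((t:ℝ) - 1) := by
      have h32 : 32 * L ≤ M.lam * ((t:ℝ) - 1) := by
        rw [div_le_iff₀ hlam0] at htlam
        have h' : (M.tlam:ℝ) * M.lam ≤ ((t:ℝ)-1) * M.lam :=
          mul_le_mul_of_nonneg_right hn hlam0.le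
        linarith
      have h2q : (2 * M.lam) * ((t:ℝ)-1) ≤ M.qmin * ((t:ℝ)-1) :=
        mul_le_mul_of_nonneg_right hq.le hnn
      linarith
    have hqn : M.qmin * ((t:ℝ)-1) ≤ M.q i * ((t:ℝ)-1) :=
      mul_le_mul_of_nonneg_right hqi hnn
    have key : (M.q i * ((t:ℝ)-1)) * (Real.log 2 - 1) ≤ (64 * L) * (Real.log 2 - 1) := by
      apply mul_le_mul_of_nonpos_right (le_trans h64 hqn) (by linarith)
    have key2 : (64 * L) * (Real.log 2 - 1) ≤ 64 * L * (-0.3) := by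
      apply mul_le_mul_of_nonneg_left (by linarith) (by positivity)
    have h1 : Real.log 2 * ε ≤ Real.log 2 * (M.q i * ((t:ℝ)-1) / 2) := by
      rw [hε]
      apply mul_le_mul_of_nonneg_left (by linarith) hlog2'
    linarith
  have hreal : Real.exp (-c * ε) * mgf Sf M.Pr c
      ≤ 1 / ((M.d:ℝ) * (M.T:ℝ)^2)^2 := by
    rw [hmgf, hexpc, hc, neg_neg]
    have hbase : (1 + ((1:ℝ)/2 - 1) * M.q i) = 1 - M.q i / 2 := by ring
    rw [hbase]
    have hfact : 1 - M.q i / 2 ≤ Real.exp (-(M.q i / 2)) := by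
      have := Real.add_one_le_exp (-(M.q i / 2))
      linarith
    have hpow : (1 - M.q i / 2) ^ (t-1) ≤ Real.exp (-(M.q i / 2)) ^ (t-1) :=
      pow_le_pow_left₀ (by linarith) hfact _
    calc Real.exp (Real.log 2 * ε) * (1 - M.q i / 2) ^ (t-1)
        ≤ Real.exp (Real.log 2 * ε) * Real.exp (-(M.q i / 2)) ^ (t-1) := by
          apply mul_le_mul_of_nonneg_left hpow (Real.exp_pos _).le
      _ = Real.exp (Real.log 2 * ε + ((t:ℝ)-1) * (-(M.q i / 2))) := by
          rw [← Real.exp_nat_mul, ← Real.exp_add, hcast]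
      _ ≤ Real.exp (-(2*L)) := Real.exp_le_exp.mpr hexpo
      _ = 1 / ((M.d:ℝ) * (M.T:ℝ)^2)^2 := by
          rw [hL, show -(2 * Real.log ((M.d:ℝ) * (M.T:ℝ)^2))
              = -(Real.log (((M.d:ℝ) * (M.T:ℝ)^2)^2)) from by
                rw [Real.log_pow]; push_cast; ring,
            Real.exp_neg, Real.exp_log (by positivity), one_div]
  -- assemble
  have hsub : {ω | ((arrCount M i t ω : ℝ)) < ε} ⊆ {ω | Sf ω ≤ ε} := by
    intro ω hω
    rw [Set.mem_setOf_eq, ← harr]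
    exact le_of_lt hω
  refine le_trans (measure_mono hsub) ?_
  rw [← ENNReal.ofReal_toReal (measure_ne_top M.Pr _)]
  exact ENNReal.ofReal_le_ofReal (hch.trans hreal)

end AuxLemmas

/-- if `q_min > 2λ`, then except with probability `1/T`, every active
type `i ∈ S_t` of every Phase-2 round `t` has at least `(1/2) q_min (t−1)` reviews. -/
theorem lemma_many_reviews_large_qmin :
    ∀ (Ω : Type) [MeasurableSpace Ω] (M : PricingModel Ω) (A : Algorithm M),
      M.Pessimistic → M.BuyerRule → M.TauAdapted →
      2 * M.lam < M.qmin →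
      M.Pr {ω | ¬ ∀ t, M.tlam < t → t ≤ M.T → ∀ i ∈ A.S t ω,
          (1 / 2) * M.qmin * ((t : ℝ) - 1) ≤ (M.nPhi i t ω : ℝ)}
        ≤ 1 / (M.T : ℝ≥0∞) := by
  intro Ω _ M A hPess hBuy _hTau hq
  haveI := M.hPr
  have hsub : {ω | ¬ ∀ t, M.tlam < t → t ≤ M.T → ∀ i ∈ A.S t ω,
        (1 / 2) * M.qmin * ((t : ℝ) - 1) ≤ (M.nPhi i t ω : ℝ)}
      ⊆ ⋃ t ∈ Finset.Icc (M.tlam + 1) M.T, ⋃ i : Fin M.d,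
        {ω | ((arrCount M i t ω : ℝ)) < 1/2 * M.qmin * ((t:ℝ)-1)} := by
    intro ω hω
    rw [Set.mem_setOf_eq] at hω
    push_neg at hω
    obtain ⟨t, ht1, ht2, i, hi, hlt⟩ := hω
    refine Set.mem_iUnion₂.mpr ⟨t, Finset.mem_Icc.mpr ⟨ht1, ht2⟩, ?_⟩
    refine Set.mem_iUnion.mpr ⟨i, ?_⟩
    rw [Set.mem_setOf_eq, ← aux_nPhi_eq_arr M A hPess hBuy ω ht1 ht2 hi]
    exact hlt
  refine le_trans (measure_mono hsub) ?_
  refine le_trans (measure_biUnion_finset_le _ _) ?_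
  have hbound : ∀ t ∈ Finset.Icc (M.tlam + 1) M.T,
      M.Pr (⋃ i : Fin M.d, {ω | ((arrCount M i t ω : ℝ)) < 1/2 * M.qmin * ((t:ℝ)-1)})
        ≤ (M.d : ℝ≥0∞) * ENNReal.ofReal (1 / ((M.d:ℝ) * (M.T:ℝ)^2)^2) := by
    intro t ht
    rw [Finset.mem_Icc] at ht
    refine le_trans (measure_iUnion_fintype_le _ _) ?_
    calc ∑ i : Fin M.d, M.Pr {ω | ((arrCount M i t ω : ℝ)) < 1/2 * M.qmin * ((t:ℝ)-1)}
        ≤ ∑ _i : Fin M.d, ENNReal.ofReal (1 / ((M.d:ℝ) * (M.T:ℝ)^2)^2) :=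
          Finset.sum_le_sum (fun i _ => aux_chernoff M hq ht.1 ht.2)
      _ = (M.d : ℝ≥0∞) * ENNReal.ofReal (1 / ((M.d:ℝ) * (M.T:ℝ)^2)^2) := by
          rw [Finset.sum_const, Finset.card_univ, Fintype.card_fin, nsmul_eq_mul]
  refine le_trans (Finset.sum_le_sum hbound) ?_
  rw [Finset.sum_const, nsmul_eq_mul]
  have hcard : ((Finset.Icc (M.tlam + 1) M.T).card : ℝ≥0∞) ≤ (M.T : ℝ≥0∞) := by
    rw [Nat.card_Icc]
    have h' : M.T + 1 - (M.tlam + 1) ≤ M.T := by omega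
    exact_mod_cast h'
  have hd1 : (1:ℝ) ≤ (M.d:ℝ) := by exact_mod_cast M.hd
  have hT1 : (1:ℝ) ≤ (M.T:ℝ) := by exact_mod_cast M.hT
  calc ((Finset.Icc (M.tlam + 1) M.T).card : ℝ≥0∞)
        * ((M.d : ℝ≥0∞) * ENNReal.ofReal (1 / ((M.d:ℝ) * (M.T:ℝ)^2)^2))
      ≤ (M.T : ℝ≥0∞) * ((M.d : ℝ≥0∞) * ENNReal.ofReal (1 / ((M.d:ℝ) * (M.T:ℝ)^2)^2)) := by
        exact mul_le_mul_left hcard _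
    _ = ENNReal.ofReal ((M.T:ℝ) * ((M.d:ℝ) * (1 / ((M.d:ℝ) * (M.T:ℝ)^2)^2))) := by
        rw [ENNReal.ofReal_mul (by positivity), ENNReal.ofReal_mul (by positivity),
          ENNReal.ofReal_natCast, ENNReal.ofReal_natCast]
    _ ≤ ENNReal.ofReal (1 / (M.T:ℝ)) := by
        apply ENNReal.ofReal_le_ofReal
        have hx0 : (0:ℝ) < (M.d:ℝ) * (M.T:ℝ)^2 := by positivity
        have hx1 : (1:ℝ) ≤ (M.d:ℝ) * (M.T:ℝ)^2 := by nlinarith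
        rw [show (M.T:ℝ) * ((M.d:ℝ) * (1 / ((M.d:ℝ) * (M.T:ℝ)^2)^2))
            = ((M.T:ℝ) * (M.d:ℝ)) / (((M.d:ℝ) * (M.T:ℝ)^2)^2) from by ring]
        rw [div_le_div_iff₀ (by positivity) (by positivity)]
        nlinarith [mul_le_mul_of_nonneg_left hx1 hx0.le]
    _ = 1 / (M.T : ℝ≥0∞) := by
        rw [one_div, one_div, ← ENNReal.ofReal_natCast M.T,
          ← ENNReal.ofReal_inv_of_pos (by linarith)]
end
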